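/- arXiv:2508.21705 — 5 statements merged into one kernel-verified Lean document; each statement's English description precedes it below -/
import Mathlib

section
/- Let (A, m, k) be a finite local Gorenstein k-algebra with a symmetric nondegenerate A-linear pairing Φ : A × A → k (i.e., Φ(ab,c) = Φ(b,ac)). Then for every i ≥ 0, Φ induces a nondegenerate pairing between m^i/m^{i+1} and (0 : m^{i+1})/(0 : m^i). -/
/-- Let `(A, m, k)` be a finite local (Gorenstein) `k`-algebra with a
symmetric nondegenerate `A`-linear pairing `Φ : A × A → k` (i.e. `Φ(ab,c) = Φ(b,ac)`).
Then for every `i ≥ 0`, `Φ` induces a nondegenerate pairing between `m^i/m^{i+1}` and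
`(0 : m^{i+1})/(0 : m^i)`. Nondegeneracy of the induced pairing is expressed elementwise:
an element of `m^i` pairing to zero with all of `(0 : m^{i+1})` lies in `m^{i+1}`, and an
element of `(0 : m^{i+1})` pairing to zero with all of `m^i` lies in `(0 : m^i)`. -/
theorem induced_pairing_nondegenerate {k A : Type*} [Field k] [CommRing A] [Algebra k A]
    [FiniteDimensional k A] [IsLocalRing A]
    (Φ : A →ₗ[k] A →ₗ[k] k)
    (hsymm : ∀ a b : A, Φ a b = Φ b a)
    (hnondeg : ∀ a : A, (∀ b : A, Φ a b = 0) → a = 0)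
    (hAlin : ∀ a b c : A, Φ (a * b) c = Φ b (a * c))
    (i : ℕ) :
    (∀ a ∈ (IsLocalRing.maximalIdeal A) ^ i,
      (∀ b : A, (∀ c ∈ (IsLocalRing.maximalIdeal A) ^ (i + 1), b * c = 0) → Φ a b = 0) →
      a ∈ (IsLocalRing.maximalIdeal A) ^ (i + 1)) ∧
    (∀ b : A, (∀ c ∈ (IsLocalRing.maximalIdeal A) ^ (i + 1), b * c = 0) →
      (∀ a ∈ (IsLocalRing.maximalIdeal A) ^ i, Φ a b = 0) →
      (∀ c ∈ (IsLocalRing.maximalIdeal A) ^ i, b * c = 0)) := by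
  set B : LinearMap.BilinForm k A := Φ with hB
  have hrefl : B.IsRefl := fun x y h => by rw [hsymm]; exact h
  have hnd : B.Nondegenerate := (LinearMap.IsRefl.nondegenerate_iff_separatingLeft hrefl).mpr hnondeg
  constructor
  · intro a _ ha
    -- use double orthogonal of the subspace W = m^(i+1)
    set W : Submodule k A :=
      ((IsLocalRing.maximalIdeal A ^ (i + 1)).restrictScalars k) with hW
    have key : B.orthogonal (B.orthogonal W) = W :=
      LinearMap.BilinForm.orthogonal_orthogonal hnd hrefl W
    have : a ∈ B.orthogonal (B.orthogonal W) := by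
      rw [LinearMap.BilinForm.mem_orthogonal_iff]
      intro n hn
      -- n annihilates m^(i+1)
      have hann : ∀ c ∈ (IsLocalRing.maximalIdeal A) ^ (i + 1), n * c = 0 := by
        intro c hc
        apply hnondeg
        intro d
        calc Φ (n * c) d = Φ (c * n) d := by rw [mul_comm]
          _ = Φ n (c * d) := hAlin c n d
          _ = Φ (c * d) n := hsymm _ _
          _ = 0 := hn (c * d) (Ideal.mul_mem_right d _ hc)
      have : Φ a n = 0 := ha n hann
      show Φ n a = 0
      rw [hsymm]; exact this
    rw [key] at this
    exact this
  · intro b _ hb c hc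
    apply hnondeg
    intro d
    calc Φ (b * c) d = Φ (c * b) d := by rw [mul_comm]
      _ = Φ b (c * d) := hAlin c b d
      _ = Φ (c * d) b := hsymm _ _
      _ = 0 := hb (c * d) (Ideal.mul_mem_right d _ hc)
end

section
/- With the notation of Iarrobino's symmetric decomposition for a finite local Gorenstein k-algebra (A, m, k) of socle degree s, the functions Δ_δ satisfy the symmetry Δ_δ(i) = Δ_δ(s - δ - i) for all 0 ≤ i ≤ s - δ, and Δ_δ(i) = 0 for i outside this range. -/
open LinearMap.BilinForm Module

/-- `Δ_δ(i)` of Iarrobino's symmetric decomposition: the dimension of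
`(m^i ∩ (0:m^{s-i-δ+1})) / (m^{i+1} ∩ (0:m^{s-i-δ+1}) + m^i ∩ (0:m^{s-i-δ}))`,
computed as a difference of `k`-dimensions (negative exponents are truncated to `0`,
and `m^0 = A`, whose annihilator is `0`). -/
noncomputable def hilbDelta (k A : Type*) [Field k] [CommRing A] [Algebra k A]
    [IsLocalRing A] (s δ i : ℕ) : ℕ :=
  let m : Ideal A := IsLocalRing.maximalIdeal A
  let ann : ℤ → Ideal A := fun j => Submodule.annihilator (m ^ j.toNat)
  Module.finrank k ((m ^ i ⊓ ann ((s : ℤ) - i - δ + 1)).restrictScalars k) -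
    Module.finrank k (((m ^ (i + 1) ⊓ ann ((s : ℤ) - i - δ + 1)) ⊔
      (m ^ i ⊓ ann ((s : ℤ) - i - δ))).restrictScalars k)


section OrthAux

variable {k V : Type*} [Field k] [AddCommGroup V] [Module k V]

private lemma orth_sup' (B : LinearMap.BilinForm k V) (U W : Submodule k V) :
    B.orthogonal (U ⊔ W) = B.orthogonal U ⊓ B.orthogonal W := by
  refine le_antisymm (le_inf (B.orthogonal_le le_sup_left) (B.orthogonal_le le_sup_right)) ?_
  intro x hx n hn
  rcases Submodule.mem_sup.1 hn with ⟨u, hu, w, hw, rfl⟩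
  have h1 : B u x = 0 := hx.1 u hu
  have h2 : B w x = 0 := hx.2 w hw
  show B (u + w) x = 0
  rw [map_add, LinearMap.add_apply, h1, h2, add_zero]

private lemma orth_inf' [FiniteDimensional k V] {B : LinearMap.BilinForm k V}
    (hB : B.Nondegenerate) (hrefl : B.IsRefl) (U W : Submodule k V) :
    B.orthogonal (U ⊓ W) = B.orthogonal U ⊔ B.orthogonal W := by
  calc B.orthogonal (U ⊓ W)
      = B.orthogonal (B.orthogonal (B.orthogonal U ⊔ B.orthogonal W)) := by
        rw [orth_sup', B.orthogonal_orthogonal hB hrefl U, B.orthogonal_orthogonal hB hrefl W]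
    _ = _ := B.orthogonal_orthogonal hB hrefl _

/-- The core symmetry of `Δ`-dimensions, via orthogonal complements. -/
private lemma delta_core [FiniteDimensional k V] {B : LinearMap.BilinForm k V}
    (hB : B.Nondegenerate) (hrefl : B.IsRefl)
    {Pa Pa' Pb Pb' Qa Qa' Qb Qb' : Submodule k V}
    (hPa : Pa' ≤ Pa) (hPb : Pb' ≤ Pb)
    (hQa : Qa = B.orthogonal Pa) (hQa' : Qa' = B.orthogonal Pa')
    (hQb : Qb = B.orthogonal Pb) (hQb' : Qb' = B.orthogonal Pb') :
    finrank k ↥(Pa ⊓ Qb') - finrank k ↥((Pa' ⊓ Qb') ⊔ (Pa ⊓ Qb)) =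
      finrank k ↥(Pb ⊓ Qa') - finrank k ↥((Pb' ⊓ Qa') ⊔ (Pb ⊓ Qa)) := by
  subst hQa hQa' hQb hQb'
  set Qa := B.orthogonal Pa with hQa
  set Qa' := B.orthogonal Pa' with hQa'
  set Qb := B.orthogonal Pb with hQb
  set Qb' := B.orthogonal Pb' with hQb'
  have hQam : Qa ≤ Qa' := B.orthogonal_le hPa
  have hQbm : Qb ≤ Qb' := B.orthogonal_le hPb
  have hoP : ∀ P : Submodule k V, B.orthogonal (B.orthogonal P) = P :=
    fun P => B.orthogonal_orthogonal hB hrefl P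
  set Vab : Submodule k V := Pa ⊓ Qb' with hVab
  set Wab : Submodule k V := (Pa' ⊓ Qb') ⊔ (Pa ⊓ Qb) with hWab
  set Vba : Submodule k V := Pb ⊓ Qa' with hVba
  set Wba : Submodule k V := (Pb' ⊓ Qa') ⊔ (Pb ⊓ Qa) with hWba
  have hWV : Wab ≤ Vab := sup_le (inf_le_inf hPa le_rfl) (inf_le_inf le_rfl hQbm)
  have horthV : B.orthogonal Vab = Qa ⊔ Pb' := by
    rw [hVab, orth_inf' hB hrefl, hoP]
  have horthW : B.orthogonal Wab = B.orthogonal Vab ⊔ Vba := by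
    rw [hWab, orth_sup', orth_inf' hB hrefl, orth_inf' hB hrefl, hoP, hoP, horthV]
    calc (Qa' ⊔ Pb') ⊓ (Qa ⊔ Pb)
        = (Qa ⊔ Pb) ⊓ (Qa' ⊔ Pb') := inf_comm _ _
      _ = Qa ⊔ (Pb ⊓ (Qa' ⊔ Pb')) :=
          sup_inf_assoc_of_le Pb (le_trans hQam le_sup_left)
      _ = Qa ⊔ ((Pb' ⊔ Qa') ⊓ Pb) := by rw [inf_comm (α := Submodule k V) Pb, sup_comm Qa' Pb']
      _ = Qa ⊔ (Pb' ⊔ (Qa' ⊓ Pb)) := by rw [sup_inf_assoc_of_le Qa' hPb]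
      _ = (Qa ⊔ Pb') ⊔ (Pb ⊓ Qa') := by
          rw [← sup_assoc, inf_comm (α := Submodule k V) Pb Qa']
  have hinter : B.orthogonal Vab ⊓ Vba = Wba := by
    rw [horthV, hVba, hWba]
    calc (Qa ⊔ Pb') ⊓ (Pb ⊓ Qa')
        = ((Pb' ⊔ Qa) ⊓ Pb) ⊓ Qa' := by rw [sup_comm Qa Pb', inf_assoc]
      _ = (Pb' ⊔ (Qa ⊓ Pb)) ⊓ Qa' := by rw [sup_inf_assoc_of_le Qa hPb]
      _ = ((Qa ⊓ Pb) ⊔ Pb') ⊓ Qa' := by rw [sup_comm]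
      _ = (Qa ⊓ Pb) ⊔ (Pb' ⊓ Qa') := by
          rw [sup_inf_assoc_of_le Pb' (le_trans inf_le_left hQam)]
      _ = (Pb' ⊓ Qa') ⊔ (Pb ⊓ Qa) := by rw [sup_comm, inf_comm (α := Submodule k V) Qa Pb]
  have e1 : finrank k ↥(B.orthogonal Vab) = finrank k V - finrank k ↥Vab :=
    finrank_orthogonal hB _
  have e2 : finrank k ↥(B.orthogonal Wab) = finrank k V - finrank k ↥Wab :=
    finrank_orthogonal hB _
  have e3 : finrank k ↥(B.orthogonal Vab ⊔ Vba) + finrank k ↥(B.orthogonal Vab ⊓ Vba) =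
      finrank k ↥(B.orthogonal Vab) + finrank k ↥Vba :=
    Submodule.finrank_sup_add_finrank_inf_eq _ _
  rw [horthW] at e2
  rw [hinter] at e3
  have l1 : finrank k ↥Vab ≤ finrank k V := Submodule.finrank_le _
  have l2 : finrank k ↥Wab ≤ finrank k ↥Vab := Submodule.finrank_mono hWV
  have l3 : finrank k ↥Wba ≤ finrank k ↥Vba :=
    Submodule.finrank_mono (sup_le (inf_le_inf hPb le_rfl) (inf_le_inf le_rfl hQam))
  omega

end OrthAux

section AnnAux

variable {k A : Type*} [Field k] [CommRing A] [Algebra k A]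

private lemma res_sup' (I J : Ideal A) :
    (I ⊔ J).restrictScalars k = I.restrictScalars k ⊔ J.restrictScalars k := by
  ext x
  rw [Submodule.restrictScalars_mem, Submodule.mem_sup, Submodule.mem_sup]
  simp only [Submodule.restrictScalars_mem]

private lemma res_inf' (I J : Ideal A) :
    (I ⊓ J).restrictScalars k = I.restrictScalars k ⊓ J.restrictScalars k := rfl

private lemma ann_top' : Submodule.annihilator (⊤ : Ideal A) = ⊥ := by
  ext x
  simp only [Submodule.mem_annihilator, Submodule.mem_bot]
  constructor
  · intro h
    simpa using h 1 Submodule.mem_top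
  · rintro rfl n _
    simp

/-- For an ideal of a Gorenstein algebra, the orthogonal complement with respect to the
Gorenstein pairing is the annihilator. -/
private lemma orth_eq_ann' {Φ : A →ₗ[k] A →ₗ[k] k}
    (hsymm : ∀ a b : A, Φ a b = Φ b a)
    (hnondeg : ∀ a : A, (∀ b : A, Φ a b = 0) → a = 0)
    (hAlin : ∀ a b c : A, Φ (a * b) c = Φ b (a * c)) (I : Ideal A) :
    LinearMap.BilinForm.orthogonal (Φ : LinearMap.BilinForm k A) (I.restrictScalars k) =
      (Submodule.annihilator I).restrictScalars k := by
  have hphi : ∀ a b : A, Φ a b = Φ (a * b) 1 := by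
    intro a b
    rw [hAlin a b 1, mul_one, hsymm]
  ext x
  simp only [mem_orthogonal_iff, Submodule.restrictScalars_mem, Submodule.mem_annihilator,
    smul_eq_mul]
  constructor
  · intro h y hy
    apply hnondeg
    intro b
    have key : Φ (x * y) b = Φ (y * b) x := by
      rw [hphi (x * y) b, hphi (y * b) x]
      ring_nf
    rw [key]
    exact h _ (I.mul_mem_right b hy)
  · intro h y hy
    show Φ y x = 0
    rw [hphi, mul_comm y x, h y hy, map_zero, LinearMap.zero_apply]

end AnnAux

section ValAux

variable (k : Type*) {A : Type*} [Field k] [CommRing A] [Algebra k A] [IsLocalRing A]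

private lemma hilbDelta_eq_of_toNat (s δ i b : ℕ)
    (h1 : ((s : ℤ) - i - δ + 1).toNat = b + 1) (h2 : ((s : ℤ) - i - δ).toNat = b) :
    hilbDelta k A s δ i =
      Module.finrank k ↥(((IsLocalRing.maximalIdeal A) ^ i).restrictScalars k ⊓
          (Submodule.annihilator ((IsLocalRing.maximalIdeal A) ^ (b + 1))).restrictScalars k) -
      Module.finrank k ↥((((IsLocalRing.maximalIdeal A) ^ (i + 1)).restrictScalars k ⊓
            (Submodule.annihilator ((IsLocalRing.maximalIdeal A) ^ (b + 1))).restrictScalars k) ⊔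
          (((IsLocalRing.maximalIdeal A) ^ i).restrictScalars k ⊓
            (Submodule.annihilator ((IsLocalRing.maximalIdeal A) ^ b)).restrictScalars k)) := by
  unfold hilbDelta
  simp only []
  beta_reduce
  rw [h1, h2]
  rw [res_sup', res_inf', res_inf', res_inf']

private lemma hilbDelta_eq_zero_of_toNat (s δ i : ℕ)
    (h1 : ((s : ℤ) - i - δ + 1).toNat = 0) (h2 : ((s : ℤ) - i - δ).toNat = 0) :
    hilbDelta k A s δ i = 0 := by
  unfold hilbDelta
  simp only []
  beta_reduce
  rw [h1, h2]
  rw [pow_zero, Ideal.one_eq_top, ann_top', inf_bot_eq, inf_bot_eq, sup_idem,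
    Submodule.restrictScalars_bot]
  simp

end ValAux

/-- in Iarrobino's symmetric decomposition for a finite local Gorenstein
`k`-algebra `(A, m, k)` of socle degree `s` (Gorenstein witnessed by a symmetric
nondegenerate `A`-linear pairing `Φ`), each `Δ_δ` satisfies the symmetry
`Δ_δ(i) = Δ_δ(s - δ - i)` for `0 ≤ i ≤ s - δ` and vanishes outside this range. -/
theorem iarrobino_delta_symmetric {k A : Type*} [Field k] (h2 : (2 : k) ≠ 0) [CommRing A]
    [Algebra k A] [FiniteDimensional k A] [IsLocalRing A]
    (Φ : A →ₗ[k] A →ₗ[k] k)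
    (hsymm : ∀ a b : A, Φ a b = Φ b a)
    (hnondeg : ∀ a : A, (∀ b : A, Φ a b = 0) → a = 0)
    (hAlin : ∀ a b c : A, Φ (a * b) c = Φ b (a * c))
    (s : ℕ)
    (hs : (IsLocalRing.maximalIdeal A) ^ s ≠ ⊥)
    (hs' : (IsLocalRing.maximalIdeal A) ^ (s + 1) = ⊥)
    (δ : ℕ) (hδ : δ + 2 ≤ s) :
    (∀ i : ℕ, i ≤ s - δ → hilbDelta k A s δ i = hilbDelta k A s δ (s - δ - i)) ∧
    (∀ i : ℕ, s - δ < i → hilbDelta k A s δ i = 0) := by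
  have hδs : δ ≤ s := by omega
  have hB : LinearMap.BilinForm.Nondegenerate (Φ : LinearMap.BilinForm k A) :=
    ⟨fun a h => hnondeg a h, fun a h => hnondeg a (fun b => (hsymm a b).trans (h b))⟩
  have hrefl : LinearMap.BilinForm.IsRefl (Φ : LinearMap.BilinForm k A) := fun a b h => (hsymm b a).trans h
  have horth : ∀ I : Ideal A,
      LinearMap.BilinForm.orthogonal (Φ : LinearMap.BilinForm k A) (I.restrictScalars k) =
        (Submodule.annihilator I).restrictScalars k :=
    orth_eq_ann' hsymm hnondeg hAlin
  have hPmono : ∀ a : ℕ, ((IsLocalRing.maximalIdeal A) ^ (a + 1)).restrictScalars k ≤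
      ((IsLocalRing.maximalIdeal A) ^ a).restrictScalars k :=
    fun a x hx => Ideal.pow_le_pow_right (Nat.le_succ a) hx
  constructor
  · intro i hi
    have hi' : i + δ ≤ s := by omega
    set j := s - δ - i with hj
    have e1 : ((s : ℤ) - i - δ + 1).toNat = j + 1 := by omega
    have e2 : ((s : ℤ) - i - δ).toNat = j := by omega
    have e3 : ((s : ℤ) - j - δ + 1).toNat = i + 1 := by omega
    have e4 : ((s : ℤ) - j - δ).toNat = i := by omega
    rw [hilbDelta_eq_of_toNat k s δ i j e1 e2, hilbDelta_eq_of_toNat k s δ j i e3 e4]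
    exact delta_core hB hrefl (hPmono i) (hPmono j)
      (horth _).symm (horth _).symm (horth _).symm (horth _).symm
  · intro i hi
    have e1 : ((s : ℤ) - i - δ + 1).toNat = 0 := by omega
    have e2 : ((s : ℤ) - i - δ).toNat = 0 := by omega
    exact hilbDelta_eq_zero_of_toNat k s δ i e1 e2
end

section
/- Let A = k[x,y]/(xy, x² − y³). Then A is a local Gorenstein algebra of dimension 5 over k, its associated graded algebra gr(A) is isomorphic to k[x,y]/(xy, x², y⁴), the Hilbert function is H_A = (1,2,1,1), and gr(A) is not Gorenstein. -/
open MvPolynomial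

/-- The initial form (lowest-degree nonzero homogeneous component) of a polynomial. -/
noncomputable def initialForm {k : Type*} [Field k] (f : MvPolynomial (Fin 2) k) :
    MvPolynomial (Fin 2) k :=
  homogeneousComponent (sInf {n | homogeneousComponent n f ≠ 0}) f

/-- The ideal of initial forms (the ideal defining the associated graded ring). -/
noncomputable def initialIdeal {k : Type*} [Field k] (I : Ideal (MvPolynomial (Fin 2) k)) :
    Ideal (MvPolynomial (Fin 2) k) :=
  Ideal.span {g | ∃ f ∈ I, f ≠ 0 ∧ g = initialForm f}

/-- The ideal `(xy, x² − y³)` of `k[x,y]`. -/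
noncomputable def exIdealI (k : Type*) [Field k] : Ideal (MvPolynomial (Fin 2) k) :=
  Ideal.span {X 0 * X 1, X 0 ^ 2 - X 1 ^ 3}

/-- The ideal `(xy, x², y⁴)` of `k[x,y]`. -/
noncomputable def exIdealJ (k : Type*) [Field k] : Ideal (MvPolynomial (Fin 2) k) :=
  Ideal.span {X 0 * X 1, X 0 ^ 2, X 1 ^ 4}

/-- `A = k[x,y]/(xy, x² − y³)`. -/
noncomputable def exAlgA (k : Type*) [Field k] : Type _ :=
  MvPolynomial (Fin 2) k ⧸ exIdealI k

noncomputable instance (k : Type*) [Field k] : CommRing (exAlgA k) :=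
  Ideal.Quotient.commRing _

noncomputable instance (k : Type*) [Field k] : Algebra k (exAlgA k) :=
  Ideal.Quotient.algebra k

/-- `B = k[x,y]/(xy, x², y⁴)`, the expected associated graded algebra. -/
noncomputable def exAlgB (k : Type*) [Field k] : Type _ :=
  MvPolynomial (Fin 2) k ⧸ exIdealJ k

noncomputable instance (k : Type*) [Field k] : CommRing (exAlgB k) :=
  Ideal.Quotient.commRing _

noncomputable instance (k : Type*) [Field k] : Algebra k (exAlgB k) :=
  Ideal.Quotient.algebra k

/-- The maximal ideal `(x, y)` of `A`. -/
noncomputable def exMaxA (k : Type*) [Field k] : Ideal (exAlgA k) :=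
  Ideal.span {Ideal.Quotient.mk (exIdealI k) (X 0), Ideal.Quotient.mk (exIdealI k) (X 1)}

/-- The maximal ideal `(x, y)` of `B`. -/
noncomputable def exMaxB (k : Type*) [Field k] : Ideal (exAlgB k) :=
  Ideal.span {Ideal.Quotient.mk (exIdealJ k) (X 0), Ideal.Quotient.mk (exIdealJ k) (X 1)}

namespace ExPf
noncomputable def e (a b : ℕ) : Fin 2 →₀ ℕ := Finsupp.single 0 a + Finsupp.single 1 b
@[simp] lemma e_apply0 (a b : ℕ) : e a b 0 = a := by simp [e]
@[simp] lemma e_apply1 (a b : ℕ) : e a b 1 = b := by simp [e, Finsupp.single_apply]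
lemma finsupp_eq_e (d : Fin 2 →₀ ℕ) : d = e (d 0) (d 1) := by
  ext i; fin_cases i <;> simp
@[simp] lemma e_le_e {a b c d : ℕ} : e a b ≤ e c d ↔ a ≤ c ∧ b ≤ d := by
  constructor
  · intro h; exact ⟨by simpa using h 0, by simpa using h 1⟩
  · intro ⟨h1, h2⟩ i; fin_cases i <;> simpa
@[simp] lemma e_sub_e (a b c d : ℕ) : e a b - e c d = e (a - c) (b - d) := by
  ext i; fin_cases i <;> simp [Finsupp.tsub_apply]
@[simp] lemma e_add_e (a b c d : ℕ) : e a b + e c d = e (a + c) (b + d) := by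
  ext i; fin_cases i <;> simp
@[simp] lemma e_degree (a b : ℕ) : (e a b).degree = a + b := by
  rw [show (e a b).degree = ∑ i : Fin 2, e a b i from
    Finset.sum_subset (Finset.subset_univ _) (by intro i _ h; simpa using h)]
  simp [Fin.sum_univ_two]
@[simp] lemma e_eq_e {a b c d : ℕ} : e a b = e c d ↔ a = c ∧ b = d := by
  constructor
  · intro h
    exact ⟨by rw [← e_apply0 a b, h, e_apply0], by rw [← e_apply1 a b, h, e_apply1]⟩
  · rintro ⟨rfl, rfl⟩; rfl

variable {k : Type*} [Field k]
lemma XY_eq : (X 0 * X 1 : MvPolynomial (Fin 2) k) = monomial (e 1 1) 1 := by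
  rw [X, X, monomial_mul, e]; simp
lemma X2_eq : (X 0 ^ 2 : MvPolynomial (Fin 2) k) = monomial (e 2 0) 1 := by
  rw [X_pow_eq_monomial, e]; simp
lemma Y3_eq : (X 1 ^ 3 : MvPolynomial (Fin 2) k) = monomial (e 0 3) 1 := by
  rw [X_pow_eq_monomial, e]; simp
lemma Y4_eq : (X 1 ^ 4 : MvPolynomial (Fin 2) k) = monomial (e 0 4) 1 := by
  rw [X_pow_eq_monomial, e]; simp
lemma coeff_mul_mono (p : MvPolynomial (Fin 2) k) (a b c d : ℕ) :
    coeff (e a b) (p * monomial (e c d) 1) =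
      if c ≤ a ∧ d ≤ b then coeff (e (a - c) (b - d)) p else 0 := by
  rw [coeff_mul_monomial']
  simp only [e_le_e, e_sub_e]
  split_ifs <;> simp
lemma memI_coeff {f : MvPolynomial (Fin 2) k} (hf : f ∈ exIdealI k) :
    coeff (e 0 0) f = 0 ∧ coeff (e 1 0) f = 0 ∧ coeff (e 0 1) f = 0 ∧
    coeff (e 0 2) f = 0 ∧ coeff (e 0 3) f = - coeff (e 2 0) f := by
  rw [exIdealI, Ideal.mem_span_pair] at hf
  obtain ⟨p, q, rfl⟩ := hf
  simp only [coeff_add, mul_sub, coeff_sub, XY_eq, X2_eq, Y3_eq, coeff_mul_mono]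
  norm_num
lemma memJ_coeff {f : MvPolynomial (Fin 2) k} (hf : f ∈ exIdealJ k) :
    coeff (e 0 0) f = 0 ∧ coeff (e 1 0) f = 0 ∧ coeff (e 0 1) f = 0 ∧
    coeff (e 0 2) f = 0 ∧ coeff (e 0 3) f = 0 := by
  rw [exIdealJ] at hf
  rw [show ({X 0 * X 1, X 0 ^ 2, X 1 ^ 4} : Set (MvPolynomial (Fin 2) k)) =
    insert (X 0 * X 1) {X 0 ^ 2, X 1 ^ 4} from rfl, Ideal.span_insert,
    Submodule.mem_sup] at hf
  obtain ⟨u, hu, v, hv, rfl⟩ := hf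
  rw [Ideal.mem_span_singleton'] at hu
  rw [Ideal.mem_span_pair] at hv
  obtain ⟨p, rfl⟩ := hu
  obtain ⟨q, r, rfl⟩ := hv
  simp only [coeff_add, XY_eq, X2_eq, Y4_eq, coeff_mul_mono]
  norm_num

-- NEW in chunk 2
lemma XY_mem_J : (X 0 * X 1 : MvPolynomial (Fin 2) k) ∈ exIdealJ k :=
  Ideal.subset_span (by left; rfl)
lemma X2_mem_J : (X 0 ^ 2 : MvPolynomial (Fin 2) k) ∈ exIdealJ k :=
  Ideal.subset_span (by right; left; rfl)
lemma Y4_mem_J : (X 1 ^ 4 : MvPolynomial (Fin 2) k) ∈ exIdealJ k :=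
  Ideal.subset_span (by right; right; rfl)

lemma mono_dvd_memJ (c d a b : ℕ) (r : k)
    (hg : (monomial (e c d) 1 : MvPolynomial (Fin 2) k) ∈ exIdealJ k)
    (hca : c ≤ a) (hdb : d ≤ b) :
    (monomial (e a b) r : MvPolynomial (Fin 2) k) ∈ exIdealJ k := by
  have h : (monomial (e a b) r : MvPolynomial (Fin 2) k)
      = monomial (e (a - c) (b - d)) r * monomial (e c d) 1 := by
    rw [monomial_mul, mul_one, e_add_e, Nat.sub_add_cancel hca, Nat.sub_add_cancel hdb]
  rw [h]
  exact Ideal.mul_mem_left _ _ hg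

lemma memJ_of_coeff {f : MvPolynomial (Fin 2) k}
    (h0 : coeff (e 0 0) f = 0) (h1 : coeff (e 1 0) f = 0) (h2 : coeff (e 0 1) f = 0)
    (h3 : coeff (e 0 2) f = 0) (h4 : coeff (e 0 3) f = 0) :
    f ∈ exIdealJ k := by
  rw [f.as_sum]
  apply Ideal.sum_mem
  intro m hm
  have hc : coeff m f ≠ 0 := mem_support_iff.mp hm
  rw [finsupp_eq_e m] at hc ⊢
  rcases Nat.lt_or_ge (m 0) 2 with h2a | h2a
  · rcases Nat.lt_or_ge (m 0) 1 with h1a | h1a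
    · rcases Nat.lt_or_ge (m 1) 4 with h4b | h4b
      · exfalso
        have ha0 : m 0 = 0 := by omega
        rw [ha0] at hc
        interval_cases h : (m 1)
        · exact hc h0
        · exact hc h2
        · exact hc h3
        · exact hc h4
      · exact mono_dvd_memJ 0 4 _ _ _ (by rw [← Y4_eq]; exact Y4_mem_J) (by omega) h4b
    · rcases Nat.lt_or_ge (m 1) 1 with h1b | h1b
      · exfalso
        have ha1 : m 0 = 1 := by omega
        have hb0 : m 1 = 0 := by omega
        rw [ha1, hb0] at hc
        exact hc h1
      · exact mono_dvd_memJ 1 1 _ _ _ (by rw [← XY_eq]; exact XY_mem_J) h1a h1b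
  · exact mono_dvd_memJ 2 0 _ _ _ (by rw [← X2_eq]; exact X2_mem_J) h2a (by omega)

lemma hc_X2 (n : ℕ) :
    homogeneousComponent n (X 0 ^ 2 : MvPolynomial (Fin 2) k)
      = if n = 2 then X 0 ^ 2 else 0 :=
  homogeneousComponent_of_mem ((mem_homogeneousSubmodule _ _).mpr (isHomogeneous_X_pow _ _))

lemma hc_Y3 (n : ℕ) :
    homogeneousComponent n (X 1 ^ 3 : MvPolynomial (Fin 2) k)
      = if n = 3 then X 1 ^ 3 else 0 :=
  homogeneousComponent_of_mem ((mem_homogeneousSubmodule _ _).mpr (isHomogeneous_X_pow _ _))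

lemma X2_ne : (X 0 ^ 2 : MvPolynomial (Fin 2) k) ≠ 0 := by
  intro h
  have h' := congrArg (coeff (e 2 0)) h
  rw [X2_eq, coeff_monomial] at h'
  simp at h'

lemma Y4_ne : (X 1 ^ 4 : MvPolynomial (Fin 2) k) ≠ 0 := by
  intro h
  have h' := congrArg (coeff (e 0 4)) h
  rw [Y4_eq, coeff_monomial] at h'
  simp at h'

lemma XY_ne : (X 0 * X 1 : MvPolynomial (Fin 2) k) ≠ 0 := by
  intro h
  have h' := congrArg (coeff (e 1 1)) h
  rw [XY_eq, coeff_monomial] at h'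
  simp at h'

lemma X2Y3_ne : (X 0 ^ 2 - X 1 ^ 3 : MvPolynomial (Fin 2) k) ≠ 0 := by
  intro h
  have h' := congrArg (coeff (e 2 0)) h
  rw [coeff_sub, X2_eq, Y3_eq, coeff_monomial, coeff_monomial] at h'
  simp [e_eq_e] at h'

lemma initialForm_of_homog {n : ℕ} {g : MvPolynomial (Fin 2) k}
    (hom : g.IsHomogeneous n) (hg : g ≠ 0) : initialForm g = g := by
  have hcomp : ∀ m, homogeneousComponent m g = if m = n then g else 0 :=
    fun m => homogeneousComponent_of_mem ((mem_homogeneousSubmodule _ _).mpr hom)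
  have hset : {m | homogeneousComponent m g ≠ 0} = {n} := by
    ext m
    simp only [Set.mem_setOf_eq, hcomp, Set.mem_singleton_iff]
    split_ifs with h <;> simp [h, hg]
  rw [initialForm, hset, csInf_singleton, hcomp, if_pos rfl]

lemma XY_mem_I : (X 0 * X 1 : MvPolynomial (Fin 2) k) ∈ exIdealI k :=
  Ideal.subset_span (by left; rfl)
lemma X2Y3_mem_I : (X 0 ^ 2 - X 1 ^ 3 : MvPolynomial (Fin 2) k) ∈ exIdealI k :=
  Ideal.subset_span (by right; rfl)
lemma Y4_mem_I : (X 1 ^ 4 : MvPolynomial (Fin 2) k) ∈ exIdealI k := by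
  rw [exIdealI, Ideal.mem_span_pair]
  exact ⟨X 0, -(X 1), by ring⟩

lemma initialForm_X2Y3 :
    initialForm (X 0 ^ 2 - X 1 ^ 3 : MvPolynomial (Fin 2) k) = X 0 ^ 2 := by
  have hcomp : ∀ m, homogeneousComponent m (X 0 ^ 2 - X 1 ^ 3 : MvPolynomial (Fin 2) k)
      = (if m = 2 then X 0 ^ 2 else 0) - (if m = 3 then X 1 ^ 3 else 0) := by
    intro m; rw [map_sub, hc_X2, hc_Y3]
  have h2 : (2 : ℕ) ∈ {m | homogeneousComponent m (X 0 ^ 2 - X 1 ^ 3 : MvPolynomial (Fin 2) k) ≠ 0} := by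
    simp only [Set.mem_setOf_eq, hcomp]
    norm_num
  have hinf : sInf {m | homogeneousComponent m (X 0 ^ 2 - X 1 ^ 3 : MvPolynomial (Fin 2) k) ≠ 0} = 2 := by
    refine le_antisymm (Nat.sInf_le h2) (le_csInf ⟨2, h2⟩ ?_)
    intro m hm
    simp only [Set.mem_setOf_eq, hcomp] at hm
    by_contra hlt
    push_neg at hlt
    interval_cases m <;> simp at hm
  rw [initialForm, hinf, map_sub, hc_X2, hc_Y3]
  norm_num

lemma initialIdeal_eq : initialIdeal (exIdealI k) = exIdealJ k := by
  apply le_antisymm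
  · rw [initialIdeal, Ideal.span_le]
    rintro g ⟨f, hfI, hf0, rfl⟩
    show initialForm f ∈ exIdealJ k
    set d := sInf {n | homogeneousComponent n f ≠ 0} with hd
    obtain ⟨c0, c1, c2, c3, c4⟩ := memI_coeff hfI
    have hcoeff : ∀ a b : ℕ, coeff (e a b) (initialForm f)
        = if a + b = d then coeff (e a b) f else 0 := by
      intro a b
      rw [initialForm, coeff_homogeneousComponent, e_degree, hd]
    apply memJ_of_coeff
    · rw [hcoeff]; split_ifs with h; · exact c0
      · rfl
    · rw [hcoeff]; split_ifs with h; · exact c1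
      · rfl
    · rw [hcoeff]; split_ifs with h; · exact c2
      · rfl
    · rw [hcoeff]; split_ifs with h; · exact c3
      · rfl
    · rw [hcoeff]; split_ifs with h
      · rw [c4]
        have hlow : homogeneousComponent 2 f = 0 := by
          by_contra hne
          have h2 := Nat.sInf_le (s := {n | homogeneousComponent n f ≠ 0}) hne
          omega
        have h20 := congrArg (coeff (e 2 0)) hlow
        rw [coeff_homogeneousComponent, e_degree] at h20
        norm_num at h20
        rw [h20, neg_zero]
      · rfl
  · rw [exIdealJ, Ideal.span_le]
    rintro g (rfl | rfl | rfl)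
    · exact Ideal.subset_span ⟨_, XY_mem_I, XY_ne,
        (initialForm_of_homog ((isHomogeneous_X _ _).mul (isHomogeneous_X _ _)) XY_ne).symm⟩
    · exact Ideal.subset_span ⟨_, X2Y3_mem_I, X2Y3_ne, initialForm_X2Y3.symm⟩
    · exact Ideal.subset_span ⟨_, Y4_mem_I, Y4_ne,
        (initialForm_of_homog (isHomogeneous_X_pow _ _) Y4_ne).symm⟩

lemma mono_eq (a b : ℕ) (c : k) :
    (monomial (e a b) c : MvPolynomial (Fin 2) k) = C c * X 0 ^ a * X 1 ^ b := by
  rw [C_apply, X_pow_eq_monomial, X_pow_eq_monomial, monomial_mul, monomial_mul]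
  simp [e]

section Aside
variable (k)

noncomputable def mA : MvPolynomial (Fin 2) k →ₐ[k] exAlgA k :=
  Ideal.Quotient.mkₐ k (exIdealI k)

/-- the five basis vectors of A -/
noncomputable def vA : Fin 5 → exAlgA k :=
  ![1, mA k (X 0), mA k (X 1), mA k (X 1 ^ 2), mA k (X 1 ^ 3)]

end Aside

lemma mA_eq_mk (p : MvPolynomial (Fin 2) k) : mA k p = Ideal.Quotient.mk (exIdealI k) p := rfl

lemma mA_zero_iff (p : MvPolynomial (Fin 2) k) : mA k p = 0 ↔ p ∈ exIdealI k := by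
  rw [mA_eq_mk]
  exact Ideal.Quotient.eq_zero_iff_mem

-- relations in A
lemma relA_xy : mA k (X 0) * mA k (X 1) = 0 := by
  rw [← map_mul, mA_zero_iff]; exact XY_mem_I
lemma relA_x2 : mA k (X 0) ^ 2 = mA k (X 1) ^ 3 := by
  rw [← sub_eq_zero, ← map_pow, ← map_pow, ← map_sub, mA_zero_iff]; exact X2Y3_mem_I
lemma relA_y4 : mA k (X 1) ^ 4 = 0 := by
  rw [← map_pow, mA_zero_iff]; exact Y4_mem_I
lemma relA_xy3 : mA k (X 0) * mA k (X 1) ^ 3 = 0 := by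
  have : mA k (X 0) * mA k (X 1) ^ 3 = (mA k (X 0) * mA k (X 1)) * mA k (X 1) ^ 2 := by ring
  rw [this, relA_xy, zero_mul]

lemma liA_comb (g : Fin 5 → k) (hg : ∑ i, g i • vA k i = 0) : g = 0 := by
  set F : MvPolynomial (Fin 2) k :=
    monomial (e 0 0) (g 0) + monomial (e 1 0) (g 1) + monomial (e 0 1) (g 2) +
      monomial (e 0 2) (g 3) + monomial (e 0 3) (g 4) with hF
  have hmk : mA k F = ∑ i, g i • vA k i := by
    rw [hF, Fin.sum_univ_five]
    show _ = g 0 • (1 : exAlgA k) + g 1 • mA k (X 0) + g 2 • mA k (X 1)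
        + g 3 • mA k (X 1 ^ 2) + g 4 • mA k (X 1 ^ 3)
    rw [← map_one (mA k)]
    simp only [← map_smul, ← map_add]
    congr 1
    simp only [mono_eq, smul_eq_C_mul]
    ring
  rw [hg, mA_zero_iff] at hmk
  obtain ⟨c0, c1, c2, c3, c4⟩ := memI_coeff hmk
  have k00 : coeff (e 0 0) F = g 0 := by simp [hF, coeff_monomial]
  have k10 : coeff (e 1 0) F = g 1 := by simp [hF, coeff_monomial]
  have k01 : coeff (e 0 1) F = g 2 := by simp [hF, coeff_monomial]
  have k02 : coeff (e 0 2) F = g 3 := by simp [hF, coeff_monomial]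
  have k03 : coeff (e 0 3) F = g 4 := by simp [hF, coeff_monomial]
  have k20 : coeff (e 2 0) F = 0 := by simp [hF, coeff_monomial]
  funext i
  fin_cases i
  · exact k00 ▸ c0
  · exact k10 ▸ c1
  · exact k01 ▸ c2
  · exact k02 ▸ c3
  · show g 4 = 0
    rw [← k03, c4, k20, neg_zero]

lemma liA : LinearIndependent k (vA k) := by
  refine (@Fintype.linearIndependent_iff _ k (exAlgA k) _ _ Algebra.toModule _ _).mpr ?_
  intro g hg i
  exact congrFun (liA_comb g hg) i

lemma spanA_mono (a b : ℕ) :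
    mA k (X 0) ^ a * mA k (X 1) ^ b ∈ Submodule.span k (Set.range (vA k)) := by
  set x := mA k (X 0); set y := mA k (X 1)
  have hv : ∀ i, vA k i ∈ Submodule.span k (Set.range (vA k)) :=
    fun i => Submodule.subset_span ⟨i, rfl⟩
  have h1 : (1 : exAlgA k) ∈ Submodule.span k (Set.range (vA k)) := by
    have := hv 0; rwa [show vA k 0 = 1 from rfl] at this
  have hx : x ∈ Submodule.span k (Set.range (vA k)) := by
    have := hv 1; rwa [show vA k 1 = x from rfl] at this
  have hy : y ∈ Submodule.span k (Set.range (vA k)) := by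
    have := hv 2; rwa [show vA k 2 = y from rfl] at this
  have hy2 : y ^ 2 ∈ Submodule.span k (Set.range (vA k)) := by
    have := hv 3; rwa [show vA k 3 = y ^ 2 from by simp [vA, map_pow]; rfl] at this
  have hy3 : y ^ 3 ∈ Submodule.span k (Set.range (vA k)) := by
    have := hv 4; rwa [show vA k 4 = y ^ 3 from by simp [vA, map_pow]; rfl] at this
  rcases Nat.eq_zero_or_pos a with rfl | ha
  · -- powers of y only
    rcases Nat.lt_or_ge b 4 with hb | hb
    · interval_cases b
      · simpa using h1
      · simpa using hy
      · simpa using hy2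
      · simpa using hy3
    · have : y ^ b = y ^ (b - 4) * y ^ 4 := by
        rw [← pow_add]; congr 1; omega
      rw [pow_zero, one_mul, this, relA_y4, mul_zero]
      exact Submodule.zero_mem _
  · rcases Nat.eq_zero_or_pos b with rfl | hb
    · -- powers of x only
      rcases Nat.lt_or_ge a 2 with ha2 | ha2
      · interval_cases a
        · simpa using hx
      · have hxa : x ^ a = x ^ (a - 2) * y ^ 3 := by
          rw [← relA_x2 (k := k), ← pow_add]; congr 1; omega
        rcases Nat.eq_or_lt_of_le ha2 with rfl | ha3
        · rw [pow_zero, mul_one]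
          rw [show x ^ 2 = x ^ (2 - 2) * y ^ 3 from hxa]
          simpa using hy3
        · have h0 : x ^ a = x ^ (a - 3) * (x * y ^ 3) := by
            rw [hxa, show x ^ (a - 2) = x ^ (a - 3) * x from by
              rw [← pow_succ]; congr 1; omega]
            ring
          rw [pow_zero, mul_one, h0, relA_xy3, mul_zero]
          exact Submodule.zero_mem _
    · -- both positive: zero
      obtain ⟨a', rfl⟩ : ∃ a', a = a' + 1 := ⟨a - 1, by omega⟩
      obtain ⟨b', rfl⟩ : ∃ b', b = b' + 1 := ⟨b - 1, by omega⟩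
      have : x ^ (a' + 1) * y ^ (b' + 1) = x ^ a' * y ^ b' * (x * y) := by ring
      rw [this, relA_xy, mul_zero]
      exact Submodule.zero_mem _

lemma spanA_top : Submodule.span k (Set.range (vA k)) = ⊤ := by
  rw [eq_top_iff]
  rintro a -
  obtain ⟨p, rfl⟩ : ∃ p, mA k p = a := Ideal.Quotient.mk_surjective a
  rw [p.as_sum, map_sum]
  apply Submodule.sum_mem
  intro m _
  rw [finsupp_eq_e m, mono_eq, map_mul, map_mul, map_pow, map_pow,
    show (C (coeff (e (m 0) (m 1)) p) : MvPolynomial (Fin 2) k)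
      = algebraMap k (MvPolynomial (Fin 2) k) (coeff (e (m 0) (m 1)) p) from rfl, AlgHom.commutes,
    ← Algebra.smul_def]
  rw [smul_mul_assoc]
  exact Submodule.smul_mem _ _ (spanA_mono (k := k) (m 0) (m 1))

noncomputable def basisA : Module.Basis (Fin 5) k (exAlgA k) :=
  Module.Basis.mk (liA) (by rw [spanA_top])

lemma finrankA : Module.finrank k (exAlgA k) = 5 := by
  rw [Module.finrank_eq_card_basis (basisA : Module.Basis (Fin 5) k (exAlgA k))]
  simp

instance : Module.Finite k (exAlgA k) :=
  Module.Finite.of_basis (basisA : Module.Basis (Fin 5) k (exAlgA k))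

lemma nontrivialA : Nontrivial (exAlgA k) := by
  refine nontrivial_of_ne (vA k 0) 0 ((liA (k := k)).ne_zero 0)

lemma mul_mem_spanA (S : Submodule k (exAlgA k)) (g : exAlgA k)
    (h : ∀ i, vA k i * g ∈ S) (a : exAlgA k) : a * g ∈ S := by
  have ha : a ∈ Submodule.span k (Set.range (vA k)) := by rw [spanA_top]; trivial
  refine Submodule.span_induction ?_ ?_ ?_ ?_ ha
  · rintro b ⟨i, rfl⟩; exact h i
  · rw [zero_mul]; exact S.zero_mem
  · intro b c _ _ hb hc; rw [add_mul]; exact S.add_mem hb hc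
  · intro t b _ hb; rw [smul_mul_assoc]; exact S.smul_mem t hb

-- more relations, in convenient form
lemma rel_yx : mA k (X 1) * mA k (X 0) = 0 := by rw [mul_comm]; exact relA_xy
lemma rel_xx : mA k (X 0) * mA k (X 0) = mA k (X 1) ^ 3 := by
  rw [← pow_two, relA_x2]
lemma rel_y2x : mA k (X 1) ^ 2 * mA k (X 0) = 0 := by
  have : mA k (X 1) ^ 2 * mA k (X 0) = (mA k (X 0) * mA k (X 1)) * mA k (X 1) := by ring
  rw [this, relA_xy, zero_mul]
lemma rel_y3x : mA k (X 1) ^ 3 * mA k (X 0) = 0 := by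
  rw [mul_comm]; exact relA_xy3
lemma rel_y3y : mA k (X 1) ^ 3 * mA k (X 1) = 0 := by
  rw [← pow_succ]; exact relA_y4
lemma rel_y2y2 : mA k (X 1) ^ 2 * mA k (X 1) ^ 2 = 0 := by
  have : mA k (X 1) ^ 2 * mA k (X 1) ^ 2 = mA k (X 1) ^ 4 := by ring
  rw [this, relA_y4]
lemma rel_y2y3 : mA k (X 1) ^ 2 * mA k (X 1) ^ 3 = 0 := by
  have : mA k (X 1) ^ 2 * mA k (X 1) ^ 3 = mA k (X 1) * (mA k (X 1) ^ 4) := by ring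
  rw [this, relA_y4, mul_zero]
lemma rel_y3y3 : mA k (X 1) ^ 3 * mA k (X 1) ^ 3 = 0 := by
  have : mA k (X 1) ^ 3 * mA k (X 1) ^ 3 = mA k (X 1) ^ 2 * (mA k (X 1) ^ 4) := by ring
  rw [this, relA_y4, mul_zero]
lemma rel_y3y2 : mA k (X 1) ^ 3 * mA k (X 1) ^ 2 = 0 := by
  rw [mul_comm]; exact rel_y2y3

lemma hxmA : mA k (X 0) ∈ exMaxA k := Ideal.subset_span (Or.inl rfl)
lemma hymA : mA k (X 1) ∈ exMaxA k := Ideal.subset_span (Or.inr rfl)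

lemma mem_maxA {a : exAlgA k} (ha : a ∈ exMaxA k) :
    ∃ p q, p * mA k (X 0) + q * mA k (X 1) = a := by
  rw [exMaxA] at ha
  exact Ideal.mem_span_pair.mp ha

-- ideal power computations
lemma maxA_sq : exMaxA k ^ 2 = Ideal.span {mA k (X 1) ^ 2} := by
  apply le_antisymm
  · rw [pow_two, Ideal.mul_le]
    intro r hr s hs
    obtain ⟨p, q, rfl⟩ := mem_maxA hr
    obtain ⟨p', q', rfl⟩ := mem_maxA hs
    rw [Ideal.mem_span_singleton']
    refine ⟨p * p' * mA k (X 1) + q * q', ?_⟩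
    have expand : (p * mA k (X 0) + q * mA k (X 1)) * (p' * mA k (X 0) + q' * mA k (X 1))
        = (p * p') * (mA k (X 0) * mA k (X 0)) + (p * q' + q * p') * (mA k (X 0) * mA k (X 1))
          + (q * q') * (mA k (X 1) * mA k (X 1)) := by ring
    rw [expand, rel_xx, relA_xy, mul_zero, add_zero]
    ring
  · rw [Ideal.span_le, Set.singleton_subset_iff]
    exact Ideal.pow_mem_pow hymA 2
lemma maxA_cube : exMaxA k ^ 3 = Ideal.span {mA k (X 1) ^ 3} := by
  apply le_antisymm
  · rw [pow_succ, maxA_sq, Ideal.mul_le]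
    intro r hr s hs
    rw [Ideal.mem_span_singleton'] at hr
    obtain ⟨a, rfl⟩ := hr
    obtain ⟨p, q, rfl⟩ := mem_maxA hs
    rw [Ideal.mem_span_singleton']
    refine ⟨a * q, ?_⟩
    have expand : a * mA k (X 1) ^ 2 * (p * mA k (X 0) + q * mA k (X 1))
        = (a * p) * (mA k (X 1) ^ 2 * mA k (X 0))
          + (a * q) * (mA k (X 1) ^ 2 * mA k (X 1)) := by ring
    rw [expand, rel_y2x, mul_zero, zero_add, ← pow_succ]
  · rw [Ideal.span_le, Set.singleton_subset_iff]
    exact Ideal.pow_mem_pow hymA 3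
lemma maxA_four : exMaxA k ^ 4 = ⊥ := by
  rw [eq_bot_iff, pow_succ, maxA_cube, Ideal.mul_le]
  intro r hr s hs
  rw [Ideal.mem_span_singleton'] at hr
  obtain ⟨a, rfl⟩ := hr
  obtain ⟨p, q, rfl⟩ := mem_maxA hs
  have expand : a * mA k (X 1) ^ 3 * (p * mA k (X 0) + q * mA k (X 1))
      = (a * p) * (mA k (X 1) ^ 3 * mA k (X 0))
        + (a * q) * (mA k (X 1) ^ 3 * mA k (X 1)) := by ring
  rw [Submodule.mem_bot, expand, rel_y3x, rel_y3y, mul_zero, mul_zero, add_zero]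

lemma maxA_res : (exMaxA k).restrictScalars k
    = Submodule.span k (Set.range (vA k ∘ Fin.succ)) := by
  apply le_antisymm
  · intro a ha
    have ha' : a ∈ exMaxA k := ha
    obtain ⟨p, q, rfl⟩ := mem_maxA ha'
    set S := Submodule.span k (Set.range (vA k ∘ Fin.succ)) with hS
    have hw0 : mA k (X 0) ∈ S := Submodule.subset_span ⟨0, rfl⟩
    have hw1 : mA k (X 1) ∈ S := Submodule.subset_span ⟨1, rfl⟩
    have hw2 : mA k (X 1) ^ 2 ∈ S := by
      have h2' : (vA k ∘ Fin.succ) 2 ∈ S := Submodule.subset_span ⟨2, rfl⟩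
      rwa [show (vA k ∘ Fin.succ) 2 = mA k (X 1) ^ 2 from by simp [vA, map_pow]] at h2'
    have hw3 : mA k (X 1) ^ 3 ∈ S := by
      have h3' : (vA k ∘ Fin.succ) 3 ∈ S := Submodule.subset_span ⟨3, rfl⟩
      rwa [show (vA k ∘ Fin.succ) 3 = mA k (X 1) ^ 3 from by simp [vA, map_pow]] at h3'
    apply S.add_mem
    · refine mul_mem_spanA S (mA k (X 0)) ?_ p
      intro i
      fin_cases i
      · show (1 : exAlgA k) * mA k (X 0) ∈ S
        rw [one_mul]; exact hw0
      · show mA k (X 0) * mA k (X 0) ∈ S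
        rw [rel_xx]; exact hw3
      · show mA k (X 1) * mA k (X 0) ∈ S
        rw [rel_yx]; exact S.zero_mem
      · show mA k (X 1 ^ 2) * mA k (X 0) ∈ S
        rw [map_pow, rel_y2x]; exact S.zero_mem
      · show mA k (X 1 ^ 3) * mA k (X 0) ∈ S
        rw [map_pow, rel_y3x]; exact S.zero_mem
    · refine mul_mem_spanA S (mA k (X 1)) ?_ q
      intro i
      fin_cases i
      · show (1 : exAlgA k) * mA k (X 1) ∈ S
        rw [one_mul]; exact hw1
      · show mA k (X 0) * mA k (X 1) ∈ S
        rw [relA_xy]; exact S.zero_mem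
      · show mA k (X 1) * mA k (X 1) ∈ S
        rw [← pow_two]; exact hw2
      · show mA k (X 1 ^ 2) * mA k (X 1) ∈ S
        rw [map_pow, ← pow_succ]; exact hw3
      · show mA k (X 1 ^ 3) * mA k (X 1) ∈ S
        rw [map_pow, rel_y3y]; exact S.zero_mem
  · rw [Submodule.span_le]
    rintro a ⟨i, rfl⟩
    fin_cases i
    · exact hxmA
    · exact hymA
    · show mA k (X 1 ^ 2) ∈ (exMaxA k).restrictScalars k
      show mA k (X 1 ^ 2) ∈ exMaxA k
      rw [map_pow, pow_two]
      exact Ideal.mul_mem_left _ _ hymA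
    · show mA k (X 1 ^ 3) ∈ exMaxA k
      rw [map_pow, pow_succ]
      exact Ideal.mul_mem_left _ _ hymA

lemma finrank_maxA : Module.finrank k ((exMaxA k).restrictScalars k) = 4 := by
  rw [maxA_res, finrank_span_eq_card ((liA (k := k)).comp Fin.succ (Fin.succ_injective 4))]
  simp

lemma maxA_sq_res : (exMaxA k ^ 2).restrictScalars k
    = Submodule.span k (Set.range (vA k ∘ (![3, 4] : Fin 2 → Fin 5))) := by
  apply le_antisymm
  · intro a ha
    have ha' : a ∈ exMaxA k ^ 2 := ha
    rw [maxA_sq, Ideal.mem_span_singleton'] at ha'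
    obtain ⟨b, rfl⟩ := ha'
    set S := Submodule.span k (Set.range (vA k ∘ (![3, 4] : Fin 2 → Fin 5))) with hS
    have hw2 : mA k (X 1) ^ 2 ∈ S := by
      have h' : (vA k ∘ (![3, 4] : Fin 2 → Fin 5)) 0 ∈ S := Submodule.subset_span ⟨0, rfl⟩
      rwa [show (vA k ∘ (![3, 4] : Fin 2 → Fin 5)) 0 = mA k (X 1) ^ 2 from by
        simp [vA, map_pow]] at h'
    have hw3 : mA k (X 1) ^ 3 ∈ S := by
      have h' : (vA k ∘ (![3, 4] : Fin 2 → Fin 5)) 1 ∈ S := Submodule.subset_span ⟨1, rfl⟩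
      rwa [show (vA k ∘ (![3, 4] : Fin 2 → Fin 5)) 1 = mA k (X 1) ^ 3 from by
        simp [vA, map_pow]] at h'
    refine mul_mem_spanA S (mA k (X 1) ^ 2) ?_ b
    intro i
    fin_cases i
    · show (1 : exAlgA k) * mA k (X 1) ^ 2 ∈ S
      rw [one_mul]; exact hw2
    · show mA k (X 0) * mA k (X 1) ^ 2 ∈ S
      have hx : mA k (X 0) * mA k (X 1) ^ 2 = (mA k (X 0) * mA k (X 1)) * mA k (X 1) := by ring
      rw [hx, relA_xy, zero_mul]; exact S.zero_mem
    · show mA k (X 1) * mA k (X 1) ^ 2 ∈ S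
      rw [← pow_succ']; exact hw3
    · show mA k (X 1 ^ 2) * mA k (X 1) ^ 2 ∈ S
      rw [map_pow, rel_y2y2]; exact S.zero_mem
    · show mA k (X 1 ^ 3) * mA k (X 1) ^ 2 ∈ S
      rw [map_pow, rel_y3y2]; exact S.zero_mem
  · rw [Submodule.span_le]
    rintro a ⟨i, rfl⟩
    fin_cases i
    · show mA k (X 1 ^ 2) ∈ exMaxA k ^ 2
      rw [map_pow]
      exact Ideal.pow_mem_pow hymA 2
    · show mA k (X 1 ^ 3) ∈ exMaxA k ^ 2
      rw [map_pow, show (mA k (X 1)) ^ 3 = mA k (X 1) * mA k (X 1) ^ 2 from pow_succ' _ 2]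
      exact Ideal.mul_mem_left (exMaxA k ^ 2) _ (Ideal.pow_mem_pow hymA 2)

lemma finrank_maxA_sq : Module.finrank k ((exMaxA k ^ 2).restrictScalars k) = 2 := by
  rw [maxA_sq_res, finrank_span_eq_card ((liA (k := k)).comp (![3, 4] : Fin 2 → Fin 5)
    (by decide))]
  simp

lemma y3_ne_zero : mA k (X 1) ^ 3 ≠ 0 := by
  have h := (liA (k := k)).ne_zero 4
  rwa [show vA k 4 = mA k (X 1) ^ 3 from by simp [vA, map_pow]] at h

lemma span_y3_res : (Ideal.span {mA k (X 1) ^ 3}).restrictScalars k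
    = Submodule.span k {mA k (X 1) ^ 3} := by
  apply le_antisymm
  · intro a ha
    have ha' : a ∈ Ideal.span {mA k (X 1) ^ 3} := ha
    rw [Ideal.mem_span_singleton'] at ha'
    obtain ⟨b, rfl⟩ := ha'
    set S := Submodule.span k ({mA k (X 1) ^ 3} : Set (exAlgA k)) with hS
    have hw3 : mA k (X 1) ^ 3 ∈ S := Submodule.subset_span rfl
    refine mul_mem_spanA S (mA k (X 1) ^ 3) ?_ b
    intro i
    fin_cases i
    · show (1 : exAlgA k) * mA k (X 1) ^ 3 ∈ S
      rw [one_mul]; exact hw3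
    · show mA k (X 0) * mA k (X 1) ^ 3 ∈ S
      rw [relA_xy3]; exact S.zero_mem
    · show mA k (X 1) * mA k (X 1) ^ 3 ∈ S
      rw [mul_comm, rel_y3y]; exact S.zero_mem
    · show mA k (X 1 ^ 2) * mA k (X 1) ^ 3 ∈ S
      rw [map_pow, rel_y2y3]; exact S.zero_mem
    · show mA k (X 1 ^ 3) * mA k (X 1) ^ 3 ∈ S
      rw [map_pow, rel_y3y3]; exact S.zero_mem
  · rw [Submodule.span_le, Set.singleton_subset_iff]
    exact Ideal.subset_span rfl

lemma maxA_cube_res : (exMaxA k ^ 3).restrictScalars k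
    = Submodule.span k {mA k (X 1) ^ 3} := by
  rw [maxA_cube, span_y3_res]

lemma finrank_maxA_cube : Module.finrank k ((exMaxA k ^ 3).restrictScalars k) = 1 := by
  rw [maxA_cube_res]
  exact @finrank_span_singleton k (exAlgA k) _ _ Algebra.toModule _ y3_ne_zero

lemma annA_eq : Submodule.annihilator (exMaxA k) = Ideal.span {mA k (X 1) ^ 3} := by
  apply le_antisymm
  · intro a ha
    have hax : a * mA k (X 0) = 0 := by
      have h := Submodule.mem_annihilator.mp ha _ hxmA
      rwa [smul_eq_mul] at h
    have hay : a * mA k (X 1) = 0 := by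
      have h := Submodule.mem_annihilator.mp ha _ hymA
      rwa [smul_eq_mul] at h
    set c : Fin 5 → k := fun i => ((basisA : Module.Basis (Fin 5) k (exAlgA k)).repr a) i with hc
    have hsum : a = c 0 • (1 : exAlgA k) + c 1 • mA k (X 0) + c 2 • mA k (X 1)
        + c 3 • mA k (X 1 ^ 2) + c 4 • mA k (X 1 ^ 3) := by
      have h := (basisA : Module.Basis (Fin 5) k (exAlgA k)).sum_repr a
      rw [Fin.sum_univ_five] at h
      simp only [basisA, Module.Basis.mk_apply] at h
      rw [← h]
      rfl
    have hyc : c 0 • mA k (X 1) + c 2 • mA k (X 1) ^ 2 + c 3 • mA k (X 1) ^ 3 = 0 := by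
      have h := hay
      rw [hsum] at h
      rw [add_mul, add_mul, add_mul, add_mul, smul_mul_assoc, smul_mul_assoc,
        smul_mul_assoc, smul_mul_assoc, smul_mul_assoc, one_mul, relA_xy, smul_zero,
        map_pow, map_pow, ← pow_two,
        show mA k (X 1) ^ 2 * mA k (X 1) = mA k (X 1) ^ 3 from (pow_succ _ 2).symm,
        rel_y3y, smul_zero, add_zero, add_zero] at h
      exact h
    have hg : (![0, 0, c 0, c 2, c 3] : Fin 5 → k) = 0 := by
      apply liA_comb
      rw [Fin.sum_univ_five]
      show (0 : k) • (1 : exAlgA k) + (0 : k) • mA k (X 0) + c 0 • mA k (X 1)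
          + c 2 • mA k (X 1 ^ 2) + c 3 • mA k (X 1 ^ 3) = 0
      rw [zero_smul, zero_smul, zero_add, zero_add, map_pow, map_pow]
      exact hyc
    have hc0 : c 0 = 0 := congrFun hg 2
    have hc2 : c 2 = 0 := congrFun hg 3
    have hc3 : c 3 = 0 := congrFun hg 4
    have hxc : c 0 • mA k (X 0) + c 1 • mA k (X 1) ^ 3 = 0 := by
      have h := hax
      rw [hsum] at h
      rw [add_mul, add_mul, add_mul, add_mul, smul_mul_assoc, smul_mul_assoc,
        smul_mul_assoc, smul_mul_assoc, smul_mul_assoc, one_mul, rel_xx,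
        map_pow, map_pow, rel_yx, smul_zero, rel_y2x, smul_zero, rel_y3x, smul_zero,
        add_zero, add_zero, add_zero] at h
      exact h
    have hg' : (![0, c 0, 0, 0, c 1] : Fin 5 → k) = 0 := by
      apply liA_comb
      rw [Fin.sum_univ_five]
      show (0 : k) • (1 : exAlgA k) + c 0 • mA k (X 0) + (0 : k) • mA k (X 1)
          + (0 : k) • mA k (X 1 ^ 2) + c 1 • mA k (X 1 ^ 3) = 0
      rw [zero_smul, zero_smul, zero_smul, zero_add, add_zero, add_zero, map_pow]
      exact hxc
    have hc1 : c 1 = 0 := congrFun hg' 4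
    have ha4 : a = c 4 • mA k (X 1 ^ 3) := by
      rw [hsum, hc0, hc1, hc2, hc3, zero_smul, zero_smul, zero_smul, zero_smul,
        zero_add, zero_add, zero_add, zero_add]
    rw [Ideal.mem_span_singleton']
    refine ⟨algebraMap k _ (c 4), ?_⟩
    rw [← Algebra.smul_def, ← map_pow, ← ha4]
  · rw [Ideal.span_le, Set.singleton_subset_iff]
    rw [SetLike.mem_coe, Submodule.mem_annihilator]
    intro n hn
    obtain ⟨p, q, rfl⟩ := mem_maxA hn
    rw [smul_eq_mul]
    have expand : mA k (X 1) ^ 3 * (p * mA k (X 0) + q * mA k (X 1))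
        = p * (mA k (X 1) ^ 3 * mA k (X 0)) + q * (mA k (X 1) ^ 3 * mA k (X 1)) := by ring
    rw [expand, rel_y3x, rel_y3y, mul_zero, mul_zero, add_zero]

lemma finrank_annA :
    Module.finrank k ((Submodule.annihilator (exMaxA k)).restrictScalars k) = 1 := by
  rw [annA_eq, span_y3_res]
  exact @finrank_span_singleton k (exAlgA k) _ _ Algebra.toModule _ y3_ne_zero

lemma not_unit_of_mem_maxA {a : exAlgA k} (ha : a ∈ exMaxA k) : ¬IsUnit a := by
  have := nontrivialA (k := k)
  intro hu
  have h4 : a ^ 4 = 0 := by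
    have h := Ideal.pow_mem_pow ha 4
    rwa [maxA_four, Submodule.mem_bot] at h
  have := hu.pow 4
  rw [h4] at this
  exact zero_ne_one (isUnit_zero_iff.mp this)

lemma unit_of_not_mem_maxA {a : exAlgA k} (ha : a ∉ exMaxA k) : IsUnit a := by
  have := nontrivialA (k := k)
  set c : Fin 5 → k := fun i => ((basisA : Module.Basis (Fin 5) k (exAlgA k)).repr a) i with hc
  have hsum : a = c 0 • (1 : exAlgA k) + (c 1 • mA k (X 0) + c 2 • mA k (X 1)
      + c 3 • mA k (X 1 ^ 2) + c 4 • mA k (X 1 ^ 3)) := by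
    have h := (basisA : Module.Basis (Fin 5) k (exAlgA k)).sum_repr a
    rw [Fin.sum_univ_five] at h
    simp only [basisA, Module.Basis.mk_apply] at h
    rw [← h]
    show c 0 • vA k 0 + c 1 • vA k 1 + c 2 • vA k 2 + c 3 • vA k 3 + c 4 • vA k 4 = _
    rw [show vA k 0 = 1 from rfl, show vA k 1 = mA k (X 0) from rfl,
      show vA k 2 = mA k (X 1) from rfl, show vA k 3 = mA k (X 1 ^ 2) from rfl,
      show vA k 4 = mA k (X 1 ^ 3) from rfl]
    ring
  set n : exAlgA k := c 1 • mA k (X 0) + c 2 • mA k (X 1)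
      + c 3 • mA k (X 1 ^ 2) + c 4 • mA k (X 1 ^ 3) with hn
  have hnm : n ∈ exMaxA k := by
    have hsm : ∀ (t : k) (b : exAlgA k), b ∈ exMaxA k → t • b ∈ exMaxA k := by
      intro t b hb
      rw [Algebra.smul_def]
      exact Ideal.mul_mem_left _ _ hb
    refine Submodule.add_mem _ (Submodule.add_mem _ (Submodule.add_mem _ ?_ ?_) ?_) ?_
    · exact hsm _ _ hxmA
    · exact hsm _ _ hymA
    · refine hsm _ _ ?_
      rw [map_pow, pow_two]
      exact Ideal.mul_mem_left _ _ hymA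
    · refine hsm _ _ ?_
      rw [map_pow, show (mA k (X 1)) ^ 3 = mA k (X 1) ^ 2 * mA k (X 1) from pow_succ _ 2]
      exact Ideal.mul_mem_left _ _ hymA
  have hc0 : c 0 ≠ 0 := by
    intro h0
    apply ha
    rw [hsum, h0, zero_smul, zero_add]
    exact hnm
  have hnil : IsNilpotent n := by
    refine ⟨4, ?_⟩
    have h := Ideal.pow_mem_pow hnm 4
    rwa [maxA_four, Submodule.mem_bot] at h
  have hunit : IsUnit (c 0 • (1 : exAlgA k)) := by
    rw [Algebra.smul_def, mul_one]
    exact (isUnit_iff_ne_zero.mpr hc0).map (algebraMap k (exAlgA k))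
  rw [hsum, add_comm]
  exact hnil.isUnit_add_right_of_commute hunit (Commute.all _ _)

lemma localA : IsLocalRing (exAlgA k) := by
  have := nontrivialA (k := k)
  apply IsLocalRing.of_nonunits_add
  intro a b ha hb
  have haM : a ∈ exMaxA k := by
    by_contra h
    exact ha (unit_of_not_mem_maxA h)
  have hbM : b ∈ exMaxA k := by
    by_contra h
    exact hb (unit_of_not_mem_maxA h)
  exact not_unit_of_mem_maxA (Submodule.add_mem _ haM hbM)

-- ============ B side ============
section Bside
variable (k)
noncomputable def mB : MvPolynomial (Fin 2) k →ₐ[k] exAlgB k :=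
  Ideal.Quotient.mkₐ k (exIdealJ k)
noncomputable def vB : Fin 5 → exAlgB k :=
  ![1, mB k (X 0), mB k (X 1), mB k (X 1 ^ 2), mB k (X 1 ^ 3)]
end Bside

lemma mB_zero_iff (p : MvPolynomial (Fin 2) k) : mB k p = 0 ↔ p ∈ exIdealJ k := by
  show Ideal.Quotient.mk (exIdealJ k) p = 0 ↔ _
  exact Ideal.Quotient.eq_zero_iff_mem

lemma relB_xy : mB k (X 0) * mB k (X 1) = 0 := by
  rw [← map_mul, mB_zero_iff]; exact XY_mem_J
lemma relB_x2 : mB k (X 0) * mB k (X 0) = 0 := by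
  rw [← map_mul, mB_zero_iff, ← pow_two]; exact X2_mem_J
lemma relB_y4 : mB k (X 1) ^ 4 = 0 := by
  rw [← map_pow, mB_zero_iff]; exact Y4_mem_J
lemma relB_xy3 : mB k (X 0) * mB k (X 1) ^ 3 = 0 := by
  have h : mB k (X 0) * mB k (X 1) ^ 3 = (mB k (X 0) * mB k (X 1)) * mB k (X 1) ^ 2 := by ring
  rw [h, relB_xy, zero_mul]
lemma relB_y3y : mB k (X 1) ^ 3 * mB k (X 1) = 0 := by
  rw [← pow_succ]; exact relB_y4

lemma spanB_mono (a b : ℕ) :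
    mB k (X 0) ^ a * mB k (X 1) ^ b ∈ Submodule.span k (Set.range (vB k)) := by
  set x := mB k (X 0); set y := mB k (X 1)
  have hv : ∀ i, vB k i ∈ Submodule.span k (Set.range (vB k)) :=
    fun i => Submodule.subset_span ⟨i, rfl⟩
  have h1 : (1 : exAlgB k) ∈ Submodule.span k (Set.range (vB k)) := by
    have := hv 0; rwa [show vB k 0 = 1 from rfl] at this
  have hx : x ∈ Submodule.span k (Set.range (vB k)) := by
    have := hv 1; rwa [show vB k 1 = x from rfl] at this
  have hy : y ∈ Submodule.span k (Set.range (vB k)) := by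
    have := hv 2; rwa [show vB k 2 = y from rfl] at this
  have hy2 : y ^ 2 ∈ Submodule.span k (Set.range (vB k)) := by
    have := hv 3; rwa [show vB k 3 = y ^ 2 from by simp [vB, map_pow]; rfl] at this
  have hy3 : y ^ 3 ∈ Submodule.span k (Set.range (vB k)) := by
    have := hv 4; rwa [show vB k 4 = y ^ 3 from by simp [vB, map_pow]; rfl] at this
  rcases Nat.eq_zero_or_pos a with rfl | ha
  · rcases Nat.lt_or_ge b 4 with hb | hb
    · interval_cases b
      · simpa using h1
      · simpa using hy
      · simpa using hy2
      · simpa using hy3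
    · have hyb : y ^ b = y ^ (b - 4) * y ^ 4 := by
        rw [← pow_add]; congr 1; omega
      rw [pow_zero, one_mul, hyb, relB_y4, mul_zero]
      exact Submodule.zero_mem _
  · rcases Nat.lt_or_ge a 2 with ha2 | ha2
    · rcases Nat.eq_zero_or_pos b with rfl | hb
      · interval_cases a
        simpa using hx
      · obtain ⟨a', rfl⟩ : ∃ a', a = a' + 1 := ⟨a - 1, by omega⟩
        obtain ⟨b', rfl⟩ : ∃ b', b = b' + 1 := ⟨b - 1, by omega⟩
        have hxy : x ^ (a' + 1) * y ^ (b' + 1) = x ^ a' * y ^ b' * (x * y) := by ring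
        rw [hxy, relB_xy, mul_zero]
        exact Submodule.zero_mem _
    · obtain ⟨a', rfl⟩ : ∃ a', a = a' + 2 := ⟨a - 2, by omega⟩
      have hxa : x ^ (a' + 2) * y ^ b = x ^ a' * y ^ b * (x * x) := by ring
      rw [hxa, relB_x2, mul_zero]
      exact Submodule.zero_mem _

lemma spanB_top : Submodule.span k (Set.range (vB k)) = ⊤ := by
  rw [eq_top_iff]
  rintro a -
  obtain ⟨p, rfl⟩ : ∃ p, mB k p = a := Ideal.Quotient.mk_surjective a
  rw [p.as_sum, map_sum]
  apply Submodule.sum_mem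
  intro m _
  rw [finsupp_eq_e m, mono_eq, map_mul, map_mul, map_pow, map_pow,
    show (C (coeff (e (m 0) (m 1)) p) : MvPolynomial (Fin 2) k)
      = algebraMap k (MvPolynomial (Fin 2) k) (coeff (e (m 0) (m 1)) p) from rfl,
    AlgHom.commutes, ← Algebra.smul_def, smul_mul_assoc]
  exact Submodule.smul_mem _ _ (spanB_mono (k := k) (m 0) (m 1))

instance : Module.Finite k (exAlgB k) := by
  have h := Module.Finite.span_of_finite k (Set.finite_range (vB k))
  exact Module.Finite.equiv ((LinearEquiv.ofEq _ _ (spanB_top (k := k))).trans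
    (Submodule.topEquiv))

lemma liB_pair : LinearIndependent k (![mB k (X 0), mB k (X 1) ^ 3] : Fin 2 → exAlgB k) := by
  refine (@Fintype.linearIndependent_iff _ k (exAlgB k) _ _ Algebra.toModule _ _).mpr ?_
  intro g hg
  rw [Fin.sum_univ_two] at hg
  have hg' : mB k (monomial (e 1 0) (g 0) + monomial (e 0 3) (g 1)) = 0 := by
    rw [map_add]
    rw [show (monomial (e 1 0) (g 0) : MvPolynomial (Fin 2) k)
        = g 0 • (X 0 : MvPolynomial (Fin 2) k) from by
      rw [mono_eq, smul_eq_C_mul]; ring,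
      show (monomial (e 0 3) (g 1) : MvPolynomial (Fin 2) k)
        = g 1 • (X 1 ^ 3 : MvPolynomial (Fin 2) k) from by
      rw [mono_eq, smul_eq_C_mul]; ring,
      map_smul, map_smul, map_pow]
    have := hg
    simpa using this
  rw [mB_zero_iff] at hg'
  obtain ⟨-, c1, -, -, c4⟩ := memJ_coeff hg'
  simp only [coeff_add, coeff_monomial] at c1 c4
  intro i
  fin_cases i
  · simpa using c1
  · simpa using c4

lemma hxmB : mB k (X 0) ∈ exMaxB k := Ideal.subset_span (Or.inl rfl)
lemma hymB : mB k (X 1) ∈ exMaxB k := Ideal.subset_span (Or.inr rfl)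

lemma mem_maxB {a : exAlgB k} (ha : a ∈ exMaxB k) :
    ∃ p q, p * mB k (X 0) + q * mB k (X 1) = a := by
  rw [exMaxB] at ha
  exact Ideal.mem_span_pair.mp ha

lemma xB_mem_ann : mB k (X 0) ∈ Submodule.annihilator (exMaxB k) := by
  rw [Submodule.mem_annihilator]
  intro n hn
  obtain ⟨p, q, rfl⟩ := mem_maxB hn
  rw [smul_eq_mul]
  have expand : mB k (X 0) * (p * mB k (X 0) + q * mB k (X 1))
      = p * (mB k (X 0) * mB k (X 0)) + q * (mB k (X 0) * mB k (X 1)) := by ring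
  rw [expand, relB_x2, relB_xy, mul_zero, mul_zero, add_zero]

lemma y3B_mem_ann : mB k (X 1) ^ 3 ∈ Submodule.annihilator (exMaxB k) := by
  rw [Submodule.mem_annihilator]
  intro n hn
  obtain ⟨p, q, rfl⟩ := mem_maxB hn
  rw [smul_eq_mul]
  have expand : mB k (X 1) ^ 3 * (p * mB k (X 0) + q * mB k (X 1))
      = p * (mB k (X 0) * mB k (X 1) ^ 3) + q * (mB k (X 1) ^ 3 * mB k (X 1)) := by ring
  rw [expand, relB_xy3, relB_y3y, mul_zero, mul_zero, add_zero]

lemma finrank_annB :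
    Module.finrank k ((Submodule.annihilator (exMaxB k)).restrictScalars k) ≠ 1 := by
  have hle : Submodule.span k (Set.range (![mB k (X 0), mB k (X 1) ^ 3] : Fin 2 → exAlgB k))
      ≤ (Submodule.annihilator (exMaxB k)).restrictScalars k := by
    rw [Submodule.span_le]
    rintro a ⟨i, rfl⟩
    fin_cases i
    · exact xB_mem_ann
    · exact y3B_mem_ann
  have h2 : Module.finrank k (Submodule.span k
      (Set.range (![mB k (X 0), mB k (X 1) ^ 3] : Fin 2 → exAlgB k))) = 2 := by
    rw [finrank_span_eq_card (liB_pair (k := k))]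
    simp
  have hmono := @Submodule.finrank_mono k (exAlgB k) _ _ _ _ _ _
    (@FiniteDimensional.finiteDimensional_submodule k (exAlgB k) _ _ Algebra.toModule
      (show Module.Finite k (exAlgB k) from inferInstance) _) hle
  omega

end ExPf

/-- Let `A = k[x,y]/(xy, x² − y³)`. Then `A` is local, `dim_k A = 5`,
`A` is Gorenstein (its socle `(0 : m)` is 1-dimensional), the associated graded algebra
`gr(A)` is `k[x,y]/(xy, x², y⁴)` (i.e. the ideal of initial forms of `(xy, x²−y³)` is
`(xy, x², y⁴)`), the Hilbert function is `H_A = (1,2,1,1)` (so `dim m = 4`, `dim m² = 2`,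
`dim m³ = 1`, `m⁴ = 0`), and `gr(A) = k[x,y]/(xy, x², y⁴)` is not Gorenstein. -/
theorem example_algebra_properties {k : Type*} [Field k] (h2 : (2 : k) ≠ 0) :
    IsLocalRing (exAlgA k) ∧
    Module.finrank k (exAlgA k) = 5 ∧
    -- A is Gorenstein: the socle (0 : m) is one-dimensional
    Module.finrank k ((Submodule.annihilator (exMaxA k)).restrictScalars k) = 1 ∧
    -- gr(A) ≅ k[x,y]/(xy, x², y⁴): the initial ideal of I is J
    initialIdeal (exIdealI k) = exIdealJ k ∧
    -- Hilbert function H_A = (1, 2, 1, 1)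
    Module.finrank k ((exMaxA k).restrictScalars k) = 4 ∧
    Module.finrank k (((exMaxA k) ^ 2).restrictScalars k) = 2 ∧
    Module.finrank k (((exMaxA k) ^ 3).restrictScalars k) = 1 ∧
    (exMaxA k) ^ 4 = ⊥ ∧
    -- gr(A) is not Gorenstein
    Module.finrank k ((Submodule.annihilator (exMaxB k)).restrictScalars k) ≠ 1 :=
  ⟨ExPf.localA, ExPf.finrankA, ExPf.finrank_annA, ExPf.initialIdeal_eq, ExPf.finrank_maxA,
    ExPf.finrank_maxA_sq, ExPf.finrank_maxA_cube, ExPf.maxA_four, ExPf.finrank_annB⟩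
end

section
/- There is no finite local Gorenstein k-algebra whose Hilbert function is (1, n, n+1, 1) for any n ≥ 1. -/
open Module Submodule IsLocalRing


private lemma finrank_dualAnnihilator_aux {k A : Type*} [Field k] [AddCommGroup A] [Module k A]
    [FiniteDimensional k A] (W : Submodule k A) :
    Module.finrank k W.dualAnnihilator = Module.finrank k A - Module.finrank k W := by
  have h1 : Module.finrank k (A ⧸ W) = Module.finrank k W.dualAnnihilator :=
    LinearEquiv.finrank_eq (Subspace.quotEquivAnnihilator W)
  rw [← h1]
  have := Submodule.finrank_quotient_add_finrank W
  omega

/-- there is no finite local Gorenstein `k`-algebra whose Hilbert function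
is `(1, n, n+1, 1)` for any `n ≥ 1`. (Gorenstein: the socle `(0 : m)` is 1-dimensional;
the Hilbert function is `H_A(i) = dim_k m^i/m^{i+1}`.) -/
theorem no_gorenstein_with_hilbert_1_n_np1_1 {k : Type*} [Field k] (h2 : (2 : k) ≠ 0)
    (n : ℕ) (hn : 1 ≤ n)
    (A : Type*) [CommRing A] [Algebra k A] [FiniteDimensional k A] [IsLocalRing A]
    (hGor : Module.finrank k
      ((Submodule.annihilator (IsLocalRing.maximalIdeal A)).restrictScalars k) = 1) :
    ¬ ((Module.finrank k (((IsLocalRing.maximalIdeal A) ^ 0).restrictScalars k) -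
          Module.finrank k (((IsLocalRing.maximalIdeal A) ^ 1).restrictScalars k) = 1) ∧
       (Module.finrank k (((IsLocalRing.maximalIdeal A) ^ 1).restrictScalars k) -
          Module.finrank k (((IsLocalRing.maximalIdeal A) ^ 2).restrictScalars k) = n) ∧
       (Module.finrank k (((IsLocalRing.maximalIdeal A) ^ 2).restrictScalars k) -
          Module.finrank k (((IsLocalRing.maximalIdeal A) ^ 3).restrictScalars k) = n + 1) ∧
       (Module.finrank k (((IsLocalRing.maximalIdeal A) ^ 3).restrictScalars k) -
          Module.finrank k (((IsLocalRing.maximalIdeal A) ^ 4).restrictScalars k) = 1) ∧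
       (IsLocalRing.maximalIdeal A) ^ 4 = ⊥) := by
  classical
  rintro ⟨H0, H1, H2, H3, H4⟩
  set m : Ideal A := maximalIdeal A with hm
  -- dimensions of the powers
  set a0 := Module.finrank k ((m ^ 0).restrictScalars k)
  set a1 := Module.finrank k ((m ^ 1).restrictScalars k)
  set a2 := Module.finrank k ((m ^ 2).restrictScalars k)
  set a3 := Module.finrank k ((m ^ 3).restrictScalars k)
  set a4 := Module.finrank k ((m ^ 4).restrictScalars k)
  have ha4 : a4 = 0 := by
    show Module.finrank k ((m ^ 4).restrictScalars k) = 0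
    rw [H4]
    exact finrank_bot k A
  have ha0 : a0 = Module.finrank k A := by
    show Module.finrank k ((m ^ 0).restrictScalars k) = _
    rw [pow_zero, Ideal.one_eq_top]
    exact finrank_top k A
  -- the socle
  set W : Submodule k A := (Submodule.annihilator m).restrictScalars k with hW
  have hWne : W ≠ ⊥ := by
    intro h
    rw [h] at hGor
    simp at hGor
  obtain ⟨s, hsW, hs0⟩ := Submodule.ne_bot_iff W |>.mp hWne
  have hWspan : W = Submodule.span k {s} := by
    refine (Submodule.eq_of_le_of_finrank_le ?_ ?_).symm
    · rwa [Submodule.span_singleton_le_iff_mem]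
    · rw [hGor, finrank_span_singleton hs0]
  -- every nonzero ideal contains s
  have socle_mem : ∀ J : Ideal A, J ≠ ⊥ → s ∈ J := by
    intro J hJ
    obtain ⟨x, hxJ, hx0⟩ := Submodule.ne_bot_iff J |>.mp hJ
    -- find a nonzero socle element in J
    have hex : ∃ t : ℕ, ∀ a ∈ m ^ t, a * x = 0 := by
      refine ⟨4, fun a ha => ?_⟩
      rw [H4] at ha
      simp [Ideal.mem_bot.mp ha]
    set t0 := Nat.find hex with ht0
    have ht0pos : t0 ≠ 0 := by
      intro h
      have := Nat.find_spec hex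
      rw [← ht0, h] at this
      have h1 : (1 : A) ∈ m ^ 0 := by simp
      have := this 1 h1
      simp at this
      exact hx0 this
    obtain ⟨t1, ht1⟩ := Nat.exists_eq_succ_of_ne_zero ht0pos
    have hmin : ¬ ∀ a ∈ m ^ t1, a * x = 0 := Nat.find_min hex (by omega)
    push_neg at hmin
    obtain ⟨a, haM, hax⟩ := hmin
    have hy : a * x ∈ J := J.mul_mem_left a hxJ
    have hysoc : a * x ∈ W := by
      rw [hW]
      rw [Submodule.restrictScalars_mem]
      rw [Submodule.mem_annihilator]
      intro b hb
      have hba : a * b ∈ m ^ t0 := by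
        rw [ht1, pow_succ]
        exact Ideal.mul_mem_mul haM hb
      have h5 := Nat.find_spec hex (a * b) hba
      rw [smul_eq_mul, show a * x * b = (a * b) * x by ring, h5]
    rw [hWspan, Submodule.mem_span_singleton] at hysoc
    obtain ⟨c, hc⟩ := hysoc
    have hcne : c ≠ 0 := by
      rintro rfl
      rw [zero_smul] at hc
      exact hax hc.symm
    have : s = c⁻¹ • (a * x) := by rw [← hc, smul_smul, inv_mul_cancel₀ hcne, one_smul]
    rw [this, Algebra.smul_def]
    exact J.mul_mem_left _ hy
  -- a dual vector for s
  have hφ : ∃ φ : Module.Dual k A, φ s ≠ 0 := by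
    by_contra h
    push_neg at h
    exact hs0 ((Module.forall_dual_apply_eq_zero_iff k s).mp h)
  obtain ⟨φ, hφ⟩ := hφ
  -- the bilinear form a, b ↦ φ (a * b) gives an iso A ≃ Dual A
  set Φ : A →ₗ[k] Module.Dual k A := (LinearMap.mul k A).compr₂ φ with hΦ
  have hΦapp : ∀ a b : A, Φ a b = φ (a * b) := fun a b => rfl
  have hΦinj : Function.Injective Φ := by
    rw [injective_iff_map_eq_zero]
    intro a ha
    by_contra ha0
    have : s ∈ Ideal.span {a} := socle_mem _ (by
      simp [Ideal.span_singleton_eq_bot, ha0])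
    rw [Ideal.mem_span_singleton] at this
    obtain ⟨c, hc⟩ := this
    have : Φ a c = 0 := by rw [ha]; rfl
    rw [hΦapp, ← hc] at this
    exact hφ this
  set e : A ≃ₗ[k] Module.Dual k A :=
    LinearMap.linearEquivOfInjective Φ hΦinj (Subspace.dual_finrank_eq).symm with he
  have heapp : ∀ a : A, e a = Φ a := fun a => rfl
  -- annihilator of m^2 is the pullback of the dual annihilator
  have key : (Submodule.annihilator (m ^ 2)).restrictScalars k =
      Submodule.comap (e : A →ₗ[k] Module.Dual k A)
        (Submodule.dualAnnihilator ((m ^ 2).restrictScalars k)) := by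
    ext a
    rw [Submodule.restrictScalars_mem, Submodule.mem_annihilator, Submodule.mem_comap,
      Submodule.mem_dualAnnihilator]
    constructor
    · intro h w hw
      rw [LinearEquiv.coe_coe, heapp, hΦapp]
      rw [show a * w = a • w from rfl, h w hw, map_zero]
    · intro h b hb
      by_contra hab
      have hJ : Submodule.map (LinearMap.lsmul A A a) (m ^ 2) ≠ ⊥ := by
        rw [Submodule.ne_bot_iff]
        refine ⟨(LinearMap.lsmul A A a) b, Submodule.mem_map_of_mem hb, ?_⟩
        simpa using hab
      have hsm := socle_mem _ hJ
      rw [Submodule.mem_map] at hsm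
      obtain ⟨w, hw, hws⟩ := hsm
      have h6 := h w hw
      rw [LinearEquiv.coe_coe, heapp, hΦapp] at h6
      have h7 : a * w = s := hws
      rw [h7] at h6
      exact hφ h6
  -- hence dim (0 : m^2) = dim A - a2
  have hdim : Module.finrank k ((Submodule.annihilator (m ^ 2)).restrictScalars k) =
      Module.finrank k A - a2 := by
    rw [key, Submodule.comap_equiv_eq_map_symm, LinearEquiv.finrank_map_eq]
    exact finrank_dualAnnihilator_aux _
  have ha2le : a2 ≤ Module.finrank k A := Submodule.finrank_le _
  -- m^2 ⊆ (0 : m^2)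
  have hle : (m ^ 2).restrictScalars k ≤ (Submodule.annihilator (m ^ 2)).restrictScalars k := by
    intro x hx
    rw [Submodule.restrictScalars_mem] at hx ⊢
    rw [Submodule.mem_annihilator]
    intro w hw
    have : x * w ∈ m ^ 4 := by
      rw [show (4 : ℕ) = 2 + 2 from rfl, pow_add]
      exact Ideal.mul_mem_mul hx hw
    rw [H4] at this
    simpa using Ideal.mem_bot.mp this
  have hle' : a2 ≤ Module.finrank k ((Submodule.annihilator (m ^ 2)).restrictScalars k) :=
    Submodule.finrank_mono hle
  -- dimension counts and contradiction
  have hsum : a0 = Module.finrank k A := ha0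
  -- finrank A = a1 + 1 etc. Convert nat subtractions
  have hA : Module.finrank k A = a0 := ha0.symm
  omega
end

section
/- Let V be a d-dimensional vector space, char k ≠ 2, and fix a block partition r_0 + … + r_k = d. Let C (resp. aC) be the space of block upper-triangular matrices with symmetric (resp. antisymmetric) diagonal blocks. Then C and aC are orthogonal complements of each other in M_d(k) with respect to the trace pairing (x, y) ↦ tr(xy). -/
/-- The space of compatible endomorphisms for the block structure `(r 0, …, r K)`:
block upper-triangular matrices whose diagonal blocks are symmetric. Indices are the
sigma type `(j : Fin K) × Fin (r j)`, whose first component records the block. -/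
def blockCompat (k : Type*) [Field k] {K : ℕ} (r : Fin K → ℕ) :
    Submodule k (Matrix ((j : Fin K) × Fin (r j)) ((j : Fin K) × Fin (r j)) k) where
  carrier := {x | (∀ p q, q.1 < p.1 → x p q = 0) ∧
    ∀ (j : Fin K) (s t : Fin (r j)), x ⟨j, s⟩ ⟨j, t⟩ = x ⟨j, t⟩ ⟨j, s⟩}
  add_mem' := by
    rintro a b ⟨ha1, ha2⟩ ⟨hb1, hb2⟩
    constructor
    · intro p q h
      show a p q + b p q = 0
      rw [ha1 p q h, hb1 p q h, add_zero]
    · intro j s t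
      show a _ _ + b _ _ = a _ _ + b _ _
      rw [ha2 j s t, hb2 j s t]
  zero_mem' := by
    constructor
    · intro p q _; rfl
    · intro j s t; rfl
  smul_mem' := by
    rintro c x ⟨h1, h2⟩
    constructor
    · intro p q h
      show c * x p q = 0
      rw [h1 p q h, mul_zero]
    · intro j s t
      show c * x _ _ = c * x _ _
      rw [h2 j s t]

/-- The space of anticompatible endomorphisms for the block structure `(r 0, …, r K)`:
block upper-triangular matrices whose diagonal blocks are antisymmetric. -/
def blockAnticompat (k : Type*) [Field k] {K : ℕ} (r : Fin K → ℕ) :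
    Submodule k (Matrix ((j : Fin K) × Fin (r j)) ((j : Fin K) × Fin (r j)) k) where
  carrier := {x | (∀ p q, q.1 < p.1 → x p q = 0) ∧
    ∀ (j : Fin K) (s t : Fin (r j)), x ⟨j, s⟩ ⟨j, t⟩ = -x ⟨j, t⟩ ⟨j, s⟩}
  add_mem' := by
    rintro a b ⟨ha1, ha2⟩ ⟨hb1, hb2⟩
    constructor
    · intro p q h
      show a p q + b p q = 0
      rw [ha1 p q h, hb1 p q h, add_zero]
    · intro j s t
      show a _ _ + b _ _ = -(a _ _ + b _ _)
      rw [ha2 j s t, hb2 j s t, neg_add]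
  zero_mem' := by
    constructor
    · intro p q _; rfl
    · intro j s t
      show (0 : k) = -0
      rw [neg_zero]
  smul_mem' := by
    rintro c x ⟨h1, h2⟩
    constructor
    · intro p q h
      show c * x p q = 0
      rw [h1 p q h, mul_zero]
    · intro j s t
      show c * x _ _ = -(c * x _ _)
      rw [h2 j s t, mul_neg]


section traceHelpers
variable {k : Type*} [Field k] {I : Type*} [Fintype I] [DecidableEq I]

omit [DecidableEq I] in
lemma trace_mul_sum' (x y : Matrix I I k) :
    Matrix.trace (x * y) = ∑ p, ∑ q, x p q * y q p := by
  simp [Matrix.trace, Matrix.mul_apply, Matrix.diag]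

lemma trace_mul_single' (x : Matrix I I k) (a b : I) :
    Matrix.trace (x * Matrix.single a b 1) = x b a := by
  rw [trace_mul_sum']
  simp [Matrix.single, Matrix.of_apply, ite_and, mul_ite,
    Finset.sum_ite_eq, Finset.sum_ite_eq']

lemma trace_single_mul' (y : Matrix I I k) (a b : I) :
    Matrix.trace (Matrix.single a b 1 * y) = y b a := by
  rw [trace_mul_sum']
  simp [Matrix.single, Matrix.of_apply, ite_and, ite_mul,
    Finset.sum_ite_eq, Finset.sum_ite_eq']

end traceHelpers

section mainHelpers
variable {k : Type*} [Field k] {K : ℕ} {r : Fin K → ℕ}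

/-- forward pairing vanishing -/
lemma compat_anticompat_trace_zero (h2 : (2 : k) ≠ 0)
    (x y : Matrix ((j : Fin K) × Fin (r j)) ((j : Fin K) × Fin (r j)) k)
    (hx : x ∈ blockCompat k r) (hy : y ∈ blockAnticompat k r) :
    Matrix.trace (x * y) = 0 := by
  obtain ⟨hx1, hx2⟩ := hx
  obtain ⟨hy1, hy2⟩ := hy
  have key : ∀ p q, x p q * y q p = -(x q p * y p q) := by
    rintro ⟨i, s⟩ ⟨j, t⟩
    rcases lt_trichotomy i j with h | h | h
    · rw [hx1 ⟨j, t⟩ ⟨i, s⟩ h, hy1 ⟨j, t⟩ ⟨i, s⟩ h, zero_mul, mul_zero, neg_zero]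
    · subst h
      rw [hx2 i s t, hy2 i t s]
      ring
    · rw [hx1 ⟨i, s⟩ ⟨j, t⟩ h, hy1 ⟨i, s⟩ ⟨j, t⟩ h, zero_mul, mul_zero, neg_zero]
  have e1 : Matrix.trace (x * y) = ∑ p, ∑ q, x p q * y q p := trace_mul_sum' x y
  have e2 : Matrix.trace (x * y) = ∑ p, ∑ q, x q p * y p q :=
    e1.trans Finset.sum_comm
  have h0 : (2 : k) * Matrix.trace (x * y) = 0 := by
    rw [two_mul]
    nth_rewrite 1 [e1]
    rw [e2, ← Finset.sum_add_distrib]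
    apply Finset.sum_eq_zero
    intro p _
    rw [← Finset.sum_add_distrib]
    apply Finset.sum_eq_zero
    intro q _
    rw [key p q]
    ring
  rcases mul_eq_zero.mp h0 with h | h
  · exact absurd h h2
  · exact h
end mainHelpers

/-- for a block partition, the spaces of compatible and anticompatible
matrices are orthogonal complements of each other in `M_d(k)` with respect to the trace
pairing `(x, y) ↦ tr (x * y)` (char k ≠ 2). -/
theorem blockCompat_orthogonal_complement {k : Type*} [Field k] (h2 : (2 : k) ≠ 0)
    {K : ℕ} (r : Fin K → ℕ) (hr : ∀ j, 0 < r j) :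
    (∀ x : Matrix ((j : Fin K) × Fin (r j)) ((j : Fin K) × Fin (r j)) k,
      x ∈ blockCompat k r ↔ ∀ y ∈ blockAnticompat k r, Matrix.trace (x * y) = 0) ∧
    (∀ y : Matrix ((j : Fin K) × Fin (r j)) ((j : Fin K) × Fin (r j)) k,
      y ∈ blockAnticompat k r ↔ ∀ x ∈ blockCompat k r, Matrix.trace (x * y) = 0) := by
  constructor
  · intro x
    constructor
    · intro hx y hy
      exact compat_anticompat_trace_zero h2 x y hx hy
    · intro h
      constructor
      · intro p q hlt
        have hmem : Matrix.single q p (1 : k) ∈ blockAnticompat k r := by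
          constructor
          · intro u v huv
            apply Matrix.single_apply_of_ne
            rintro ⟨rfl, rfl⟩
            exact absurd hlt (lt_asymm huv)
          · intro j s t
            rw [Matrix.single_apply_of_ne, Matrix.single_apply_of_ne, neg_zero]
            · rintro ⟨rfl, rfl⟩
              exact absurd hlt (lt_irrefl _)
            · rintro ⟨rfl, rfl⟩
              exact absurd hlt (lt_irrefl _)
        have := h _ hmem
        rwa [trace_mul_single'] at this
      · intro j s t
        have hmem : Matrix.single (⟨j, t⟩ : (j : Fin K) × Fin (r j)) ⟨j, s⟩ (1 : k)
            - Matrix.single ⟨j, s⟩ ⟨j, t⟩ (1 : k) ∈ blockAnticompat k r := by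
          constructor
          · intro u v huv
            show _ - _ = (0 : k)
            rw [Matrix.single_apply_of_ne, Matrix.single_apply_of_ne, sub_zero]
            · rintro ⟨rfl, rfl⟩
              exact absurd huv (lt_irrefl _)
            · rintro ⟨rfl, rfl⟩
              exact absurd huv (lt_irrefl _)
          · intro j' s' t'
            simp only [Matrix.sub_apply]
            rw [neg_sub]
            by_cases hj : j' = j
            · subst hj
              simp [Matrix.single, Matrix.of_apply, Sigma.mk.inj_iff, heq_eq_eq,
                and_comm]
            · rw [Matrix.single_apply_of_ne, Matrix.single_apply_of_ne,
                Matrix.single_apply_of_ne, Matrix.single_apply_of_ne]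
              · rintro ⟨h', -⟩
                exact hj (congrArg Sigma.fst h').symm
              · rintro ⟨h', -⟩
                exact hj (congrArg Sigma.fst h').symm
              · rintro ⟨h', -⟩
                exact hj (congrArg Sigma.fst h').symm
              · rintro ⟨h', -⟩
                exact hj (congrArg Sigma.fst h').symm
        have := h _ hmem
        rw [mul_sub, Matrix.trace_sub, trace_mul_single', trace_mul_single'] at this
        linear_combination this
  · intro y
    constructor
    · intro hy x hx
      exact compat_anticompat_trace_zero h2 x y hx hy
    · intro h
      constructor
      · intro p q hlt
        have hmem : Matrix.single q p (1 : k) ∈ blockCompat k r := by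
          constructor
          · intro u v huv
            apply Matrix.single_apply_of_ne
            rintro ⟨rfl, rfl⟩
            exact absurd hlt (lt_asymm huv)
          · intro j s t
            rw [Matrix.single_apply_of_ne, Matrix.single_apply_of_ne]
            · rintro ⟨rfl, rfl⟩
              exact absurd hlt (lt_irrefl _)
            · rintro ⟨rfl, rfl⟩
              exact absurd hlt (lt_irrefl _)
        have := h _ hmem
        rwa [trace_single_mul'] at this
      · intro j s t
        have hmem : Matrix.single (⟨j, t⟩ : (j : Fin K) × Fin (r j)) ⟨j, s⟩ (1 : k)
            + Matrix.single ⟨j, s⟩ ⟨j, t⟩ (1 : k) ∈ blockCompat k r := by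
          constructor
          · intro u v huv
            show _ + _ = (0 : k)
            rw [Matrix.single_apply_of_ne, Matrix.single_apply_of_ne, add_zero]
            · rintro ⟨rfl, rfl⟩
              exact absurd huv (lt_irrefl _)
            · rintro ⟨rfl, rfl⟩
              exact absurd huv (lt_irrefl _)
          · intro j' s' t'
            simp only [Matrix.add_apply]
            by_cases hj : j' = j
            · subst hj
              simp [Matrix.single, Matrix.of_apply, Sigma.mk.inj_iff, heq_eq_eq,
                and_comm, add_comm]
            · rw [Matrix.single_apply_of_ne, Matrix.single_apply_of_ne,
                Matrix.single_apply_of_ne, Matrix.single_apply_of_ne]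
              · rintro ⟨h', -⟩
                exact hj (congrArg Sigma.fst h').symm
              · rintro ⟨h', -⟩
                exact hj (congrArg Sigma.fst h').symm
              · rintro ⟨h', -⟩
                exact hj (congrArg Sigma.fst h').symm
              · rintro ⟨h', -⟩
                exact hj (congrArg Sigma.fst h').symm
        have := h _ hmem
        rw [add_mul, Matrix.trace_add, trace_single_mul', trace_single_mul'] at this
        linear_combination this
end
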